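/- arXiv:2202.07813 — 6 statements merged into one kernel-verified Lean document; each statement's English description precedes it below -/
import Mathlib

section
/- Let T ≥ 0 and let M : [T,∞) → ℝ be continuous such that the improper integral ∫_t^∞ M(s) ds converges for every t ≥ T. Define q₁(t) := M(t), Q_k(t) := −∫_t^∞ q_k(s) ds for k ≥ 1, and q_k(t) := Σ_{j=1}^{k−1} Q_j(t) Q_{k−j}(t) for k ≥ 2, assuming all these improper integrals converge. Suppose that the series Σ_{k=1}^∞ Q_k(t) converges uniformly on compact subsets of [T,∞) and that the series Σ_{k=1}^∞ q_k(t) converges uniformly on compact subsets of [T,∞). Then the function b(t) := −Σ_{k=1}^∞ Q_k(t) is continuously differentiable on [T,∞) and satisfies the Riccati equation b'(t) + b(t)² + M(t) = 0 for all t ≥ T. -/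
open MeasureTheory Filter Topology intervalIntegral

lemma aux_primitive_hasDeriv {T : ℝ} {f : ℝ → ℝ} (hf : ContinuousOn f (Set.Ici T))
    {t : ℝ} (ht : t ∈ Set.Ici T) :
    HasDerivWithinAt (fun u => ∫ s in T..u, f s) (f t) (Set.Ici T) t := by
  have hsub : Set.uIcc T t ⊆ Set.Ici T := by
    rw [Set.uIcc_of_le ht]; exact Set.Icc_subset_Ici_self
  have hint : IntervalIntegrable f volume T t := (hf.mono hsub).intervalIntegrable
  rcases eq_or_lt_of_le (Set.mem_Ici.mp ht) with h | h
  · subst h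
    exact integral_hasDerivWithinAt_right (t := Set.Ioi T) hint
      ((hf.mono Set.Ioi_subset_Ici_self).stronglyMeasurableAtFilter_nhdsWithin
        measurableSet_Ioi T)
      ((hf T ht).mono Set.Ioi_subset_Ici_self)
  · have hca : ContinuousAt f t := (hf.mono Set.Ioi_subset_Ici_self).continuousAt
      (Ioi_mem_nhds h)
    exact (integral_hasDerivAt_right hint
      ((hf.mono Set.Ioi_subset_Ici_self).stronglyMeasurableAtFilter isOpen_Ioi t h)
      hca).hasDerivWithinAt

lemma aux_integral_tendsto {T t : ℝ} (hTt : T ≤ t) {F : ℕ → ℝ → ℝ} {g : ℝ → ℝ}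
    (hFc : ∀ n, ContinuousOn (F n) (Set.Icc T t)) (hgc : ContinuousOn g (Set.Icc T t))
    (hu : TendstoUniformlyOn F g atTop (Set.Icc T t)) :
    Tendsto (fun n => ∫ s in T..t, F n s) atTop (𝓝 (∫ s in T..t, g s)) := by
  rw [Metric.tendsto_atTop]
  intro ε hε
  have hd : (0:ℝ) < t - T + 1 := by linarith
  have hε' : 0 < ε / (t - T + 1) := by positivity
  obtain ⟨N, hN⟩ := eventually_atTop.mp (Metric.tendstoUniformlyOn_iff.mp hu _ hε')
  refine ⟨N, fun n hn => ?_⟩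
  have hsub : Set.uIcc T t ⊆ Set.Icc T t := by rw [Set.uIcc_of_le hTt]
  have hiF : IntervalIntegrable (F n) volume T t := ((hFc n).mono hsub).intervalIntegrable
  have hig : IntervalIntegrable g volume T t := (hgc.mono hsub).intervalIntegrable
  rw [dist_eq_norm, ← integral_sub hiF hig]
  have hb : ∀ x ∈ Set.uIoc T t, ‖F n x - g x‖ ≤ ε / (t - T + 1) := by
    intro x hx
    rw [Set.uIoc_of_le hTt] at hx
    have := hN n hn x ⟨le_of_lt hx.1, hx.2⟩
    rw [dist_comm, dist_eq_norm] at this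
    exact this.le
  calc ‖∫ s in T..t, (F n s - g s)‖ ≤ ε / (t - T + 1) * |t - T| :=
      intervalIntegral.norm_integral_le_of_norm_le_const hb
    _ < ε := by
      rw [abs_of_nonneg (by linarith), div_mul_eq_mul_div, div_lt_iff₀ hd]
      nlinarith

lemma aux_cauchy {a c : ℕ → ℝ} {A C m : ℝ} (ha0 : a 0 = 0) (hc0 : c 0 = 0) (hc1 : c 1 = m)
    (hck : ∀ k, 2 ≤ k → c k = ∑ j ∈ Finset.range (k + 1), a j * a (k - j))
    (hA : Tendsto (fun n => ∑ i ∈ Finset.range n, a i) atTop (𝓝 A))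
    (hC : Tendsto (fun n => ∑ i ∈ Finset.range n, c i) atTop (𝓝 C)) :
    C = A ^ 2 + m := by
  have hbdd : ∀ (f : ℕ → ℝ) (L : ℝ),
      Tendsto (fun n => ∑ i ∈ Finset.range n, f i) atTop (𝓝 L) →
      ∃ B : ℝ, ∀ n, |f n| ≤ B := by
    intro f L hf
    have h1 : Tendsto (fun n => ∑ i ∈ Finset.range (n + 1), f i) atTop (𝓝 L) :=
      hf.comp (tendsto_add_atTop_nat 1)
    have h2 : Tendsto (fun n => |f n|) atTop (𝓝 |L - L|) := by
      refine (h1.sub hf).abs.congr fun n => ?_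
      rw [Finset.sum_range_succ]; ring_nf
    rw [sub_self, abs_zero] at h2
    obtain ⟨B, hB⟩ := h2.bddAbove_range
    exact ⟨B, fun n => hB (Set.mem_range_self n)⟩
  obtain ⟨Ba, hBa⟩ := hbdd a A hA
  obtain ⟨Bc, hBc⟩ := hbdd c C hC
  have hsum : ∀ (f : ℕ → ℝ) (B : ℝ), (∀ n, |f n| ≤ B) → ∀ x : ℝ, x ∈ Set.Ioo (0:ℝ) 1 →
      Summable (fun k => ‖f k * x ^ k‖) := by
    intro f B hB x hx
    refine Summable.of_nonneg_of_le (fun k => norm_nonneg _) (fun k => ?_)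
      ((summable_geometric_of_lt_one hx.1.le hx.2).mul_left B)
    rw [Real.norm_eq_abs, abs_mul, abs_pow, abs_of_pos hx.1]
    exact mul_le_mul_of_nonneg_right (hB k) (pow_nonneg hx.1.le k)
  have key : ∀ x ∈ Set.Ioo (0:ℝ) 1,
      (∑' k : ℕ, c k * x ^ k)
        = (∑' k : ℕ, a k * x ^ k) * (∑' k : ℕ, a k * x ^ k) + m * x := by
    intro x hx
    have hsa := hsum a Ba hBa x hx
    have hsc := hsum c Bc hBc x hx
    have hmul := tsum_mul_tsum_eq_tsum_sum_range_of_summable_norm hsa hsa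
    have hinner : ∀ n : ℕ,
        (∑ k ∈ Finset.range (n + 1), (a k * x ^ k) * (a (n - k) * x ^ (n - k)))
          = c n * x ^ n - (if n = 1 then m else 0) * x ^ n := by
      intro n
      have h1 : (∑ k ∈ Finset.range (n + 1), (a k * x ^ k) * (a (n - k) * x ^ (n - k)))
          = (∑ k ∈ Finset.range (n + 1), a k * a (n - k)) * x ^ n := by
        rw [Finset.sum_mul]
        refine Finset.sum_congr rfl fun k hk => ?_
        have hk' : k ≤ n := Nat.lt_succ_iff.mp (Finset.mem_range.mp hk)
        have hxx : x ^ k * x ^ (n - k) = x ^ n := by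
          rw [← pow_add]; congr 1; omega
        calc (a k * x ^ k) * (a (n - k) * x ^ (n - k))
            = a k * a (n - k) * (x ^ k * x ^ (n - k)) := by ring
          _ = a k * a (n - k) * x ^ n := by rw [hxx]
      rw [h1]
      rcases Nat.lt_or_ge n 2 with h | h
      · interval_cases n
        · simp [ha0, hc0]
        · simp [Finset.sum_range_succ, ha0, hc1]
      · have hn1 : n ≠ 1 := by omega
        rw [← hck n h, if_neg hn1]; ring
    have hsc' : Summable (fun n : ℕ => c n * x ^ n) := Summable.of_norm hsc
    have hse : Summable (fun n : ℕ => (if n = 1 then m else 0) * x ^ n) := by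
      apply summable_of_ne_finset_zero (s := ({1} : Finset ℕ))
      intro n hn
      simp only [Finset.mem_singleton] at hn
      simp [hn]
    rw [hmul, tsum_congr hinner, Summable.tsum_sub hsc' hse]
    have he : (∑' n : ℕ, (if n = 1 then m else 0) * x ^ n) = m * x := by
      rw [tsum_eq_single 1 (fun n hn => by simp [hn])]
      simp
    rw [he]; ring
  have habel_a := Real.tendsto_tsum_powerSeries_nhdsWithin_lt hA
  have habel_c := Real.tendsto_tsum_powerSeries_nhdsWithin_lt hC
  have hx1 : Tendsto (fun x : ℝ => x) (𝓝[<] (1:ℝ)) (𝓝 1) :=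
    tendsto_id.mono_left nhdsWithin_le_nhds
  have hrhs : Tendsto
      (fun x : ℝ => (∑' k : ℕ, a k * x ^ k) * (∑' k : ℕ, a k * x ^ k) + m * x)
      (𝓝[<] (1:ℝ)) (𝓝 (A * A + m * 1)) :=
    (habel_a.mul habel_a).add (hx1.const_mul m)
  have hev : (fun x : ℝ => (∑' k : ℕ, c k * x ^ k))
      =ᶠ[𝓝[<] (1:ℝ)]
      (fun x : ℝ => (∑' k : ℕ, a k * x ^ k) * (∑' k : ℕ, a k * x ^ k) + m * x) := by
    filter_upwards [Ioo_mem_nhdsLT_of_mem (by norm_num : (1:ℝ) ∈ Set.Ioc 0 1)] with x hx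
    exact key x hx
  have := tendsto_nhds_unique habel_c (hrhs.congr' hev.symm)
  rw [this]; ring



open MeasureTheory Filter Topology

/-- Lemma 3.1 of the paper (with the corrected sign): if the series `Σ Q_k` (and the
series `Σ q_k`) converge uniformly on compact subsets of `[T,∞)`, then
`b = -Σ_{k=1}^∞ Q_k` is continuously differentiable on `[T,∞)` and solves the
Riccati equation `b' + b² + M = 0`. -/
theorem riccati_particular_solution
    (T : ℝ) (hT : 0 ≤ T)
    (M : ℝ → ℝ) (hMc : ContinuousOn M (Set.Ici T))
    (q Q : ℕ → ℝ → ℝ)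
    (hq1 : ∀ t, q 1 t = M t)
    (hqk : ∀ k, 2 ≤ k → ∀ t, q k t = ∑ j ∈ Finset.Ico 1 k, Q j t * Q (k - j) t)
    -- `Q k t = -∫_t^∞ q k`, all these improper integrals being convergent
    (hQ : ∀ k, 1 ≤ k → ∀ t ≥ T,
      Tendsto (fun R => ∫ s in t..R, q k s) atTop (𝓝 (-(Q k t))))
    (b : ℝ → ℝ)
    -- the series `Σ_{k=1}^∞ Q_k` converges uniformly on compact subsets of `[T,∞)`,
    -- with sum `-b`
    (hQu : ∀ Kc : Set ℝ, Kc ⊆ Set.Ici T → IsCompact Kc →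
      TendstoUniformlyOn (fun n t => ∑ k ∈ Finset.Icc 1 n, Q k t)
        (fun t => -b t) atTop Kc)
    -- the series `Σ_{k=1}^∞ q_k` converges uniformly on compact subsets of `[T,∞)`
    (hqu : ∃ g : ℝ → ℝ, ∀ Kc : Set ℝ, Kc ⊆ Set.Ici T → IsCompact Kc →
      TendstoUniformlyOn (fun n t => ∑ k ∈ Finset.Icc 1 n, q k t)
        g atTop Kc) :
    ∃ b' : ℝ → ℝ, ContinuousOn b' (Set.Ici T) ∧
      (∀ t ∈ Set.Ici T, HasDerivWithinAt b (b' t) (Set.Ici T) t) ∧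
      ∀ t ≥ T, b' t + b t ^ 2 + M t = 0 := by
  classical
  obtain ⟨g, hg⟩ := hqu
  -- Strong induction: continuity of `q k`, `Q k` and the integral identity for `Q k`.
  have key : ∀ k : ℕ, 1 ≤ k → ContinuousOn (q k) (Set.Ici T) ∧
      ContinuousOn (Q k) (Set.Ici T) ∧
      ∀ t ∈ Set.Ici T, Q k t = Q k T + ∫ s in T..t, q k s := by
    intro k
    induction k using Nat.strong_induction_on with
    | _ k ih =>
      intro hk1
      have hqc : ContinuousOn (q k) (Set.Ici T) := by
        rcases eq_or_lt_of_le hk1 with h | h2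
        · exact hMc.congr fun t _ => by rw [← h, hq1]
        · refine ContinuousOn.congr (f := fun t => ∑ j ∈ Finset.Ico 1 k, Q j t * Q (k - j) t)
            ?_ fun t _ => hqk k h2 t
          refine continuousOn_finset_sum _ fun j hj => ?_
          rw [Finset.mem_Ico] at hj
          have h1 : ContinuousOn (Q j) (Set.Ici T) := (ih j hj.2 hj.1).2.1
          have h2' : ContinuousOn (Q (k - j)) (Set.Ici T) :=
            (ih (k - j) (by omega) (by omega)).2.1
          exact h1.mul h2'
      have hint : ∀ u v : ℝ, T ≤ u → T ≤ v → IntervalIntegrable (q k) volume u v := by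
        intro u v hu hv
        refine (hqc.mono ?_).intervalIntegrable
        exact fun x hx => le_trans (le_min hu hv) (Set.mem_Icc.mp hx).1
      have hiden : ∀ t ∈ Set.Ici T, Q k t = Q k T + ∫ s in T..t, q k s := by
        intro t ht
        have h1 := hQ k hk1 t ht
        have h2 := hQ k hk1 T le_rfl
        have h3 : Tendsto (fun R => ∫ s in t..R, q k s) atTop
            (𝓝 (-(Q k T) - ∫ s in T..t, q k s)) := by
          have hev : ∀ᶠ R in atTop,
              (∫ s in T..R, q k s) - (∫ s in T..t, q k s) = ∫ s in t..R, q k s := by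
            filter_upwards [eventually_ge_atTop T] with R hR
            exact intervalIntegral.integral_interval_sub_left
              (hint T R le_rfl hR) (hint T t le_rfl ht)
          exact ((h2.sub tendsto_const_nhds).congr' hev)
        have h4 := tendsto_nhds_unique h1 h3
        linarith
      have hQc : ContinuousOn (Q k) (Set.Ici T) := by
        refine ContinuousOn.congr (f := fun t => Q k T + ∫ s in T..t, q k s)
          ?_ fun t ht => hiden t ht
        intro t ht
        exact (((aux_primitive_hasDeriv hqc ht).const_add (Q k T))).continuousWithinAt
      exact ⟨hqc, hQc, hiden⟩
  -- continuity of the limits `g` and `b` on `[T, ∞)`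
  have hpsc : ∀ n : ℕ, ∀ Kc : Set ℝ, Kc ⊆ Set.Ici T →
      ContinuousOn (fun t => ∑ i ∈ Finset.Icc 1 n, q i t) Kc := by
    intro n Kc hKc
    refine continuousOn_finset_sum _ fun i hi => ?_
    exact ((key i (Finset.mem_Icc.mp hi).1).1).mono hKc
  have hgc : ContinuousOn g (Set.Ici T) := by
    intro t ht
    have hlt : t < t + 1 := by linarith
    have hKc : Set.Icc T (t + 1) ⊆ Set.Ici T := Set.Icc_subset_Ici_self
    have hcont : ContinuousOn g (Set.Icc T (t + 1)) :=
      (hg _ hKc isCompact_Icc).continuousOn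
        (Eventually.of_forall fun n => hpsc n _ hKc).frequently
    have ht' : t ∈ Set.Icc T (t + 1) := ⟨ht, by linarith⟩
    refine (hcont t ht').mono_of_mem_nhdsWithin ?_
    rw [← Set.Ici_inter_Iic]
    exact Filter.inter_mem self_mem_nhdsWithin
      (mem_nhdsWithin_of_mem_nhds (Iic_mem_nhds hlt))
  -- the integral identity for `b`
  have hb_eq : ∀ t ∈ Set.Ici T, b t = b T - ∫ s in T..t, g s := by
    intro t ht
    have hpart : ∀ n : ℕ, (∑ k ∈ Finset.Icc 1 n, Q k t)
        = (∑ k ∈ Finset.Icc 1 n, Q k T) + ∫ s in T..t, (∑ k ∈ Finset.Icc 1 n, q k s) := by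
      intro n
      rw [intervalIntegral.integral_finset_sum (fun i hi => by
        refine (((key i (Finset.mem_Icc.mp hi).1).1).mono ?_).intervalIntegrable
        exact fun x hx => le_trans (le_min le_rfl ht) (Set.mem_Icc.mp hx).1)]
      rw [← Finset.sum_add_distrib]
      exact Finset.sum_congr rfl fun i hi =>
        (key i (Finset.mem_Icc.mp hi).1).2.2 t ht
    have h1 : Tendsto (fun n => ∑ k ∈ Finset.Icc 1 n, Q k t) atTop (𝓝 (-b t)) :=
      (hQu {t} (by simpa using ht) isCompact_singleton).tendsto_at rfl
    have h2 : Tendsto (fun n => ∑ k ∈ Finset.Icc 1 n, Q k T) atTop (𝓝 (-b T)) :=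
      (hQu {T} (by simp) isCompact_singleton).tendsto_at rfl
    have h3 : Tendsto (fun n => ∫ s in T..t, (∑ k ∈ Finset.Icc 1 n, q k s)) atTop
        (𝓝 (∫ s in T..t, g s)) := by
      refine aux_integral_tendsto ht (fun n => (hpsc n _ Set.Icc_subset_Ici_self) ) 
        (hgc.mono Set.Icc_subset_Ici_self)
        (hg _ Set.Icc_subset_Ici_self isCompact_Icc)
    have h4 := tendsto_nhds_unique h1 ((h2.add h3).congr fun n => (hpart n).symm)
    linarith
  refine ⟨fun t => -(g t), hgc.neg, ?_, ?_⟩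
  · intro t ht
    have hd : HasDerivWithinAt (fun u => b T - ∫ s in T..u, g s) (-(g t)) (Set.Ici T) t :=
      (aux_primitive_hasDeriv hgc ht).const_sub (b T)
    exact hd.congr (fun u hu => hb_eq u hu) (hb_eq t ht)
  · intro t ht
    -- pointwise limits at t
    have h1 : Tendsto (fun n => ∑ k ∈ Finset.Icc 1 n, Q k t) atTop (𝓝 (-b t)) :=
      (hQu {t} (by simpa using ht) isCompact_singleton).tendsto_at rfl
    have h2 : Tendsto (fun n => ∑ k ∈ Finset.Icc 1 n, q k t) atTop (𝓝 (g t)) :=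
      (hg {t} (by simpa using ht) isCompact_singleton).tendsto_at rfl
    set a : ℕ → ℝ := fun k => if k = 0 then 0 else Q k t with ha_def
    set c : ℕ → ℝ := fun k => if k = 0 then 0 else q k t with hc_def
    have hshift : ∀ (f : ℕ → ℝ) (u : ℕ → ℝ), (f 0 = 0) → (∀ i, 1 ≤ i → f i = u i) →
        ∀ n : ℕ, (∑ i ∈ Finset.range (n + 1), f i) = ∑ i ∈ Finset.Icc 1 n, u i := by
      intro f u hf0 hfu n
      have hsub : Finset.Icc 1 n ⊆ Finset.range (n + 1) := by
        intro i hi; rw [Finset.mem_Icc] at hi; exact Finset.mem_range.mpr (by omega)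
      have h0 : ∀ i ∈ Finset.range (n + 1), i ∉ Finset.Icc 1 n → f i = 0 := by
        intro i hi hni
        rw [Finset.mem_range] at hi; rw [Finset.mem_Icc] at hni
        have : i = 0 := by omega
        rw [this, hf0]
      rw [← Finset.sum_subset hsub h0]
      exact Finset.sum_congr rfl fun i hi => hfu i (Finset.mem_Icc.mp hi).1
    have hAa : Tendsto (fun n => ∑ i ∈ Finset.range n, a i) atTop (𝓝 (-b t)) := by
      rw [← tendsto_add_atTop_iff_nat 1]
      refine h1.congr fun n => ?_
      exact (hshift a (fun i => Q i t) (by simp [ha_def]) (fun i hi => by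
        simp [ha_def, Nat.one_le_iff_ne_zero.mp hi]) n).symm
    have hCc : Tendsto (fun n => ∑ i ∈ Finset.range n, c i) atTop (𝓝 (g t)) := by
      rw [← tendsto_add_atTop_iff_nat 1]
      refine h2.congr fun n => ?_
      exact (hshift c (fun i => q i t) (by simp [hc_def]) (fun i hi => by
        simp [hc_def, Nat.one_le_iff_ne_zero.mp hi]) n).symm
    have hck' : ∀ k, 2 ≤ k → c k = ∑ j ∈ Finset.range (k + 1), a j * a (k - j) := by
      intro k hk
      have hc : c k = ∑ j ∈ Finset.Ico 1 k, Q j t * Q (k - j) t := by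
        simp only [hc_def]
        rw [if_neg (by omega)]
        exact hqk k hk t
      have hsub : Finset.Ico 1 k ⊆ Finset.range (k + 1) := by
        intro j hj; rw [Finset.mem_Ico] at hj; exact Finset.mem_range.mpr (by omega)
      have h0 : ∀ j ∈ Finset.range (k + 1), j ∉ Finset.Ico 1 k → a j * a (k - j) = 0 := by
        intro j hj hnj
        rw [Finset.mem_range] at hj; rw [Finset.mem_Ico] at hnj
        have : j = 0 ∨ j = k := by omega
        rcases this with h | h <;> simp [ha_def, h]
      rw [hc, ← Finset.sum_subset hsub h0]
      refine Finset.sum_congr rfl fun j hj => ?_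
      rw [Finset.mem_Ico] at hj
      simp only [ha_def]
      rw [if_neg (by omega), if_neg (by omega)]
    have hid := aux_cauchy (a := a) (c := c) (m := M t) (by simp [ha_def]) (by simp [hc_def])
      (by simp [hc_def, hq1]) hck' hAa hCc
    -- hid : g t = (-b t) ^ 2 + M t
    have : -(g t) + b t ^ 2 + M t = 0 := by rw [hid]; ring
    exact this
end

section
/- Let T ≥ 0 and let M : [T,∞) → ℝ be continuous such that the improper integral ∫_t^∞ M(s) ds converges for every t ≥ T. Define q₁(t) := M(t), Q_k(t) := −∫_t^∞ q_k(s) ds for k ≥ 1, and q_k(t) := Σ_{j=1}^{k−1} Q_j(t) Q_{k−j}(t) for k ≥ 2, assuming all these improper integrals converge, and set φ(t) := −∫_t^∞ Q₂(s) ds, assumed finite for every t ≥ T. Then Q₂(t) ≤ 0 for all t ≥ T, and for every integer k ≥ 2 and every t ≥ T one has |Q_k(t)| ≤ 4^{k−1} (−Q₂(t)) φ(t)^{(k−2)/2}. -/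
open MeasureTheory Filter Topology intervalIntegral

lemma my_catalan_le_four_pow (n : ℕ) : catalan n ≤ 4 ^ n := by
  have h1 : catalan n ≤ n.centralBinom := by
    calc catalan n ≤ (n + 1) * catalan n := Nat.le_mul_of_pos_left _ n.succ_pos
    _ = n.centralBinom := succ_mul_catalan_eq_centralBinom n
  refine h1.trans ?_
  have h2 : n.centralBinom ≤ ∑ i ∈ Finset.range (2 * n + 1), (2 * n).choose i := by
    rw [Nat.centralBinom_eq_two_mul_choose]
    exact Finset.single_le_sum (f := fun i => (2 * n).choose i)
      (fun i _ => Nat.zero_le _) (Finset.mem_range.2 (by omega))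
  rw [Nat.sum_range_choose] at h2
  calc n.centralBinom ≤ 2 ^ (2 * n) := h2
  _ = 4 ^ n := by rw [pow_mul]; norm_num

lemma my_catalan_conv (k : ℕ) (hk : 2 ≤ k) :
    ∑ j ∈ Finset.Ico 1 k, catalan (j - 1) * catalan (k - j - 1) = catalan (k - 1) := by
  obtain ⟨n, rfl⟩ : ∃ n, k = n + 2 := ⟨k - 2, by omega⟩
  rw [show n + 2 - 1 = n + 1 by omega, catalan_succ,
    show ∑ i : Fin n.succ, catalan ↑i * catalan (n - ↑i)
        = ∑ i ∈ Finset.range n.succ, catalan i * catalan (n - i) from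
      Fin.sum_univ_eq_sum_range (fun i => catalan i * catalan (n - i)) n.succ,
    Finset.sum_Ico_eq_sum_range]
  rw [show n + 2 - 1 = n + 1 by omega]
  refine Finset.sum_congr rfl fun i hi => ?_
  rw [Finset.mem_range] at hi
  congr 1
  · congr 1; omega
  · congr 1; omega

lemma my_key_identity {T : ℝ} {f F : ℝ → ℝ} (hf : ContinuousOn f (Set.Ici T))
    (h : ∀ t, T ≤ t → Tendsto (fun R => ∫ s in t..R, f s) atTop (𝓝 (-(F t)))) :
    ∀ a, T ≤ a → ∀ b, T ≤ b → F b - F a = ∫ s in a..b, f s := by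
  have hint : ∀ a b : ℝ, T ≤ a → T ≤ b → IntervalIntegrable f volume a b := by
    intro a b ha hb
    apply (hf.mono ?_).intervalIntegrable
    intro x hx
    exact le_trans (le_min ha hb) hx.1
  have hbase : ∀ t, T ≤ t → F t = F T + ∫ s in T..t, f s := by
    intro t ht
    have h1 := h T le_rfl
    have h2 : Tendsto (fun R => ∫ s in T..R, f s) atTop
        (𝓝 ((∫ s in T..t, f s) + -(F t))) := by
      have h3 : (fun R => (∫ s in T..t, f s) + ∫ s in t..R, f s) =ᶠ[atTop]
          (fun R => ∫ s in T..R, f s) := by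
        filter_upwards [eventually_ge_atTop t] with R hR
        exact integral_add_adjacent_intervals (hint T t le_rfl ht) (hint t R ht (ht.trans hR))
      exact Tendsto.congr' h3 (tendsto_const_nhds.add (h t ht))
    have h4 := tendsto_nhds_unique h1 h2
    linarith
  intro a ha b hb
  have h5 := integral_interval_sub_left (hint T b le_rfl hb) (hint T a le_rfl ha)
  rw [hbase a ha, hbase b hb]
  linarith

lemma my_le_of_tendsto_integral {t L : ℝ} {f : ℝ → ℝ}
    (hint : ∀ a b : ℝ, t ≤ a → t ≤ b → IntervalIntegrable f volume a b)
    (hpos : ∀ s, t ≤ s → 0 ≤ f s)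
    (h : Tendsto (fun R => ∫ s in t..R, f s) atTop (𝓝 L)) :
    ∀ R, t ≤ R → ∫ s in t..R, f s ≤ L := by
  intro R hR
  refine ge_of_tendsto h ?_
  filter_upwards [eventually_ge_atTop R] with R' hR'
  have h1 : ∫ s in t..R', f s = (∫ s in t..R, f s) + ∫ s in R..R', f s :=
    (integral_add_adjacent_intervals (hint t R le_rfl hR) (hint R R' hR (hR.trans hR'))).symm
  have h2 : 0 ≤ ∫ s in R..R', f s :=
    intervalIntegral.integral_nonneg hR' (fun x hx => hpos x (hR.trans hx.1))
  linarith

lemma my_cont_of_identity {T : ℝ} {f F : ℝ → ℝ} (hf : ContinuousOn f (Set.Ici T))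
    (hid : ∀ t, T ≤ t → F t = F T + ∫ s in T..t, f s) :
    ContinuousOn F (Set.Ici T) := by
  intro x hx
  have hx' : T ≤ x := hx
  have hTx : T ≤ x + 1 := by linarith
  have hmem : Set.Icc T (x + 1) ∈ 𝓝[Set.Ici T] x := by
    refine mem_nhdsWithin.2 ⟨Set.Iio (x + 1), isOpen_Iio, by simp [lt_add_one], ?_⟩
    intro y hy
    exact ⟨hy.2, le_of_lt hy.1⟩
  have hint : IntervalIntegrable f volume T (x + 1) := by
    apply (hf.mono ?_).intervalIntegrable
    intro y hy
    exact le_trans (le_min le_rfl hTx) hy.1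
  have hcp : ContinuousOn (fun b => F T + ∫ s in T..b, f s) (Set.uIcc T (x + 1)) :=
    continuousOn_const.add (continuousOn_primitive_interval' hint Set.left_mem_uIcc)
  rw [Set.uIcc_of_le hTx] at hcp
  have h2 : ContinuousWithinAt F (Set.Icc T (x + 1)) x := by
    have h3 := hcp x ⟨hx', by linarith⟩
    exact h3.congr (fun y hy => (hid y hy.1).symm ▸ rfl) ((hid x hx').symm ▸ rfl)
  exact h2.mono_of_mem_nhdsWithin hmem

lemma my_integral_abs_mul_le {t R : ℝ} (htR : t ≤ R) {f g : ℝ → ℝ}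
    (hf : ContinuousOn f (Set.Icc t R)) (hg : ContinuousOn g (Set.Icc t R)) :
    ∫ s in t..R, |f s * g s| ≤
      Real.sqrt (∫ s in t..R, f s ^ 2) * Real.sqrt (∫ s in t..R, g s ^ 2) := by
  set μ : Measure ℝ := volume.restrict (Set.Ioc t R) with hμ
  haveI : IsFiniteMeasure μ := by
    constructor
    rw [hμ, Measure.restrict_apply_univ, Real.volume_Ioc]
    exact ENNReal.ofReal_lt_top
  have hpq : (2 : ℝ).HolderConjugate 2 := Real.HolderConjugate.two_two
  have hmem : ∀ {h : ℝ → ℝ}, ContinuousOn h (Set.Icc t R) →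
      MemLp h (ENNReal.ofReal 2) μ := by
    intro h hh
    obtain ⟨C, hC⟩ := (isCompact_Icc (a := t) (b := R)).exists_bound_of_continuousOn hh
    refine MemLp.of_bound ((hh.mono Set.Ioc_subset_Icc_self).aestronglyMeasurable
      measurableSet_Ioc) C ?_
    refine (ae_restrict_mem measurableSet_Ioc).mono fun x hx => ?_
    exact hC x (Set.Ioc_subset_Icc_self hx)
  have key := integral_mul_norm_le_Lp_mul_Lq hpq (hmem hf) (hmem hg)
  have e1 : ∫ s in t..R, |f s * g s| = ∫ a, ‖f a‖ * ‖g a‖ ∂μ := by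
    rw [intervalIntegral.integral_of_le htR]
    refine integral_congr_ae (Eventually.of_forall fun a => ?_)
    simp only [Real.norm_eq_abs, abs_mul]
  have e2 : ∀ (h : ℝ → ℝ), ∫ a, ‖h a‖ ^ (2:ℝ) ∂μ = ∫ s in t..R, h s ^ 2 := by
    intro h
    rw [intervalIntegral.integral_of_le htR]
    refine integral_congr_ae (Eventually.of_forall fun a => ?_)
    show ‖h a‖ ^ (2:ℝ) = h a ^ 2
    rw [Real.norm_eq_abs, show (2:ℝ) = ((2:ℕ):ℝ) by norm_num, Real.rpow_natCast, sq_abs]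
  rw [e1]
  refine key.trans ?_
  rw [e2 f, e2 g, ← Real.sqrt_eq_rpow, ← Real.sqrt_eq_rpow]

open MeasureTheory Filter Topology

/-- Lemma 3.2 of the paper: `Q₂ ≤ 0` and, for every `k ≥ 2`,
`|Q_k(t)| ≤ 4^(k-1) (-Q₂(t)) φ(t)^((k-2)/2)` where `φ(t) = -∫_t^∞ Q₂`. -/
theorem Qk_estimate
    (T : ℝ) (hT : 0 ≤ T)
    (M : ℝ → ℝ) (hMc : ContinuousOn M (Set.Ici T))
    (q Q : ℕ → ℝ → ℝ)
    (hq1 : ∀ t, q 1 t = M t)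
    (hqk : ∀ k, 2 ≤ k → ∀ t, q k t = ∑ j ∈ Finset.Ico 1 k, Q j t * Q (k - j) t)
    -- `Q k t = -∫_t^∞ q k`, all these improper integrals being convergent
    (hQ : ∀ k, 1 ≤ k → ∀ t ≥ T,
      Tendsto (fun R => ∫ s in t..R, q k s) atTop (𝓝 (-(Q k t))))
    -- `φ t = -∫_t^∞ Q₂`, assumed finite for every `t ≥ T`
    (φ : ℝ → ℝ)
    (hφ : ∀ t ≥ T,
      Tendsto (fun R => ∫ s in t..R, Q 2 s) atTop (𝓝 (-(φ t)))) :
    ∀ t ≥ T, Q 2 t ≤ 0 ∧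
      ∀ k : ℕ, 2 ≤ k →
        |Q k t| ≤ 4 ^ (k - 1) * (-(Q 2 t)) * φ t ^ (((k : ℝ) - 2) / 2) := by
  -- basic setup
  have hIci : ∀ {a b : ℝ}, T ≤ a → T ≤ b → Set.uIcc a b ⊆ Set.Ici T := by
    intro a b ha hb x hx
    exact le_trans (le_min ha hb) hx.1
  -- continuity of all q k and Q k on [T, ∞)
  have hcont : ∀ k, 1 ≤ k →
      ContinuousOn (q k) (Set.Ici T) ∧ ContinuousOn (Q k) (Set.Ici T) := by
    intro k
    induction k using Nat.strong_induction_on with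
    | _ k ih =>
    intro hk1
    have hqc : ContinuousOn (q k) (Set.Ici T) := by
      rcases eq_or_lt_of_le hk1 with h1 | h2
      · rw [← h1]
        exact hMc.congr fun x _ => hq1 x
      · have hsum : ContinuousOn
            (fun t => ∑ j ∈ Finset.Ico 1 k, Q j t * Q (k - j) t) (Set.Ici T) := by
          apply continuousOn_finset_sum
          intro j hj
          rw [Finset.mem_Ico] at hj
          exact ((ih j (by omega) (by omega)).2).mul
            ((ih (k - j) (by omega) (by omega)).2)
        exact hsum.congr fun t _ => hqk k h2 t
    refine ⟨hqc, ?_⟩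
    refine my_cont_of_identity hqc fun t ht => ?_
    have := my_key_identity hqc (fun s hs => hQ k hk1 s hs) T le_rfl t ht
    linarith
  have hqC : ∀ k, 1 ≤ k → ContinuousOn (q k) (Set.Ici T) := fun k hk => (hcont k hk).1
  have hQC : ∀ k, 1 ≤ k → ContinuousOn (Q k) (Set.Ici T) := fun k hk => (hcont k hk).2
  have hInt : ∀ (f : ℝ → ℝ), ContinuousOn f (Set.Ici T) → ∀ a b : ℝ, T ≤ a → T ≤ b →
      IntervalIntegrable f volume a b :=
    fun f hf a b ha hb => (hf.mono (hIci ha hb)).intervalIntegrable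
  have hFTC : ∀ k, 1 ≤ k → ∀ a, T ≤ a → ∀ b, T ≤ b →
      Q k b - Q k a = ∫ s in a..b, q k s :=
    fun k hk => my_key_identity (hqC k hk) (fun s hs => hQ k hk s hs)
  have hφid : ∀ a, T ≤ a → ∀ b, T ≤ b → φ b - φ a = ∫ s in a..b, Q 2 s :=
    my_key_identity (hQC 2 one_le_two) (fun s hs => hφ s hs)
  -- q 2 = Q 1 ^ 2 ≥ 0
  have hq2 : ∀ t, q 2 t = Q 1 t * Q 1 t := by
    intro t
    rw [hqk 2 le_rfl, show Finset.Ico 1 2 = {1} from rfl, Finset.sum_singleton]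
  have hq2n : ∀ t, 0 ≤ q 2 t := fun t => (hq2 t) ▸ mul_self_nonneg _
  -- Q 2 ≤ 0, tail bounds, monotonicity
  have hq2tail : ∀ t, T ≤ t → ∀ R, t ≤ R → ∫ s in t..R, q 2 s ≤ -(Q 2 t) := by
    intro t ht
    exact my_le_of_tendsto_integral
      (fun a b ha hb => hInt (q 2) (hqC 2 one_le_two) a b (ht.trans ha) (ht.trans hb))
      (fun s _ => hq2n s) (hQ 2 one_le_two t ht)
  have hQ2le : ∀ t, T ≤ t → Q 2 t ≤ 0 := by
    intro t ht
    have h0 := hq2tail t ht t le_rfl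
    simp only [intervalIntegral.integral_same] at h0
    linarith
  have hQ2mono : ∀ a, T ≤ a → ∀ b, a ≤ b → Q 2 a ≤ Q 2 b := by
    intro a ha b hab
    have h1 := hFTC 2 one_le_two a ha b (ha.trans hab)
    have h2 : 0 ≤ ∫ s in a..b, q 2 s :=
      intervalIntegral.integral_nonneg hab (fun x _ => hq2n x)
    linarith
  -- φ facts
  have hφtend : ∀ t, T ≤ t →
      Tendsto (fun R => ∫ s in t..R, -(Q 2 s)) atTop (𝓝 (φ t)) := by
    intro t ht
    have h1 := (hφ t ht).neg
    rw [neg_neg] at h1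
    refine h1.congr fun R => ?_
    rw [← intervalIntegral.integral_neg]
  have hφtail : ∀ t, T ≤ t → ∀ R, t ≤ R → ∫ s in t..R, -(Q 2 s) ≤ φ t := by
    intro t ht
    exact my_le_of_tendsto_integral
      (fun a b ha hb => hInt (fun s => -(Q 2 s)) (hQC 2 one_le_two).neg a b
        (ht.trans ha) (ht.trans hb))
      (fun s hs => by have := hQ2le s (ht.trans hs); linarith) (hφtend t ht)
  have hφnonneg : ∀ t, T ≤ t → 0 ≤ φ t := by
    intro t ht
    refine ge_of_tendsto (hφtend t ht) ?_
    filter_upwards [eventually_ge_atTop t] with R hR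
    exact intervalIntegral.integral_nonneg hR
      (fun x hx => by have := hQ2le x (ht.trans hx.1); linarith)
  have hφmono : ∀ a, T ≤ a → ∀ b, a ≤ b → φ b ≤ φ a := by
    intro a ha b hab
    have h1 := hφid a ha b (ha.trans hab)
    have h2 : 0 ≤ ∫ s in a..b, -(Q 2 s) :=
      intervalIntegral.integral_nonneg hab
        (fun x hx => by have := hQ2le x (ha.trans hx.1); linarith)
    rw [intervalIntegral.integral_neg] at h2
    linarith
  -- main bound with Catalan numbers
  have main : ∀ k, 2 ≤ k → ∀ t, T ≤ t →
      |Q k t| ≤ (catalan (k - 1) : ℝ) * (-(Q 2 t)) * φ t ^ (((k : ℝ) - 2) / 2) := by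
    intro k
    induction k using Nat.strong_induction_on with
    | _ k ih =>
    intro hk2 t ht
    rcases eq_or_lt_of_le hk2 with h2 | h3
    · subst h2
      rw [show (((2:ℕ):ℝ) - 2) / 2 = (0:ℝ) by norm_num, Real.rpow_zero,
        show (2:ℕ) - 1 = 1 from rfl, catalan_one, abs_of_nonpos (hQ2le t ht)]
      norm_num
    · -- 3 ≤ k
      have hk3 : 3 ≤ k := h3
      have hk1 : (1:ℕ) ≤ k := by omega
      have hkR3 : (3:ℝ) ≤ (k:ℝ) := by exact_mod_cast hk3
      set e : ℝ := ((k:ℝ) - 2) / 2 with he_def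
      have he : 0 ≤ e := div_nonneg (by linarith) (by norm_num)
      have hat : 0 ≤ -(Q 2 t) := by have := hQ2le t ht; linarith
      have hφt : 0 ≤ φ t := hφnonneg t ht
      have habs : Tendsto (fun R => |∫ s in t..R, q k s|) atTop (𝓝 |Q k t|) := by
        have h1 := (hQ k hk1 t ht).abs
        rwa [abs_neg] at h1
      refine le_of_tendsto habs ?_
      filter_upwards [eventually_ge_atTop t] with R hR
      have hcontQQ : ∀ j, 1 ≤ j → j < k →
          ContinuousOn (fun s => Q j s * Q (k - j) s) (Set.Ici T) := by
        intro j hj1 hjk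
        exact (hQC j hj1).mul (hQC (k - j) (by omega))
      have hIccsub : Set.Icc t R ⊆ Set.Ici T := fun x hx => le_trans ht hx.1
      have hsplit : ∫ s in t..R, q k s
          = ∑ j ∈ Finset.Ico 1 k, ∫ s in t..R, Q j s * Q (k - j) s := by
        have h1 : ∫ s in t..R, q k s
            = ∫ s in t..R, ∑ j ∈ Finset.Ico 1 k, Q j s * Q (k - j) s :=
          intervalIntegral.integral_congr (fun s _ => hqk k hk2 s)
        rw [h1]
        refine intervalIntegral.integral_finset_sum (fun j hj => ?_)
        rw [Finset.mem_Ico] at hj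
        exact hInt _ (hcontQQ j hj.1 hj.2) t R ht (ht.trans hR)
      -- ∫ Q1² ≤ -(Q 2 t)
      have hQ1sq : ∫ s in t..R, Q 1 s ^ 2 ≤ -(Q 2 t) := by
        have h1 : ∫ s in t..R, Q 1 s ^ 2 = ∫ s in t..R, q 2 s :=
          intervalIntegral.integral_congr (fun s _ => by rw [hq2 s, sq])
        rw [h1]; exact hq2tail t ht R hR
      -- IH for k-1 in convenient form
      have hIH1 : ∀ s, T ≤ s → |Q (k-1) s| ≤
          (catalan (k-2) : ℝ) * (-(Q 2 s)) * φ s ^ (((k:ℝ) - 3)/2) := by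
        intro s hs
        have h1 := ih (k-1) (by omega) (by omega) s hs
        have hc : ((k - 1 : ℕ) : ℝ) = (k:ℝ) - 1 := by
          rw [Nat.cast_sub (by omega : 1 ≤ k)]; norm_num
        rw [show (k-1) - 1 = k - 2 by omega, hc,
          show ((k:ℝ) - 1 - 2)/2 = ((k:ℝ)-3)/2 by ring] at h1
        exact h1
      have hφk3 : (0:ℝ) ≤ (k:ℝ) - 3 := by linarith
      set C1 : ℝ := (catalan (k-2) : ℝ)^2 * ((-(Q 2 t)) * φ t ^ ((k:ℝ)-3)) with hC1
      have hC1n : 0 ≤ C1 :=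
        mul_nonneg (sq_nonneg _) (mul_nonneg hat (Real.rpow_nonneg hφt _))
      have hQk1sq : ∫ s in t..R, Q (k-1) s ^ 2 ≤ C1 * φ t := by
        have hpt : ∀ s ∈ Set.Icc t R, Q (k-1) s ^ 2 ≤ C1 * (-(Q 2 s)) := by
          intro s hs
          have hsT : T ≤ s := ht.trans hs.1
          have has : 0 ≤ -(Q 2 s) := by have := hQ2le s hsT; linarith
          have hast : -(Q 2 s) ≤ -(Q 2 t) := by have := hQ2mono t ht s hs.1; linarith
          have hφs : 0 ≤ φ s := hφnonneg s hsT
          have hφst : φ s ≤ φ t := hφmono t ht s hs.1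
          have h1 := hIH1 s hsT
          have h2 : Q (k-1) s ^ 2
              ≤ ((catalan (k-2) : ℝ) * (-(Q 2 s)) * φ s ^ (((k:ℝ)-3)/2))^2 := by
            rw [← sq_abs]
            exact pow_le_pow_left₀ (abs_nonneg _) h1 2
          refine h2.trans ?_
          have h3 : (φ s ^ (((k:ℝ)-3)/2))^2 = φ s ^ ((k:ℝ)-3) := by
            rw [← Real.rpow_natCast (φ s ^ (((k:ℝ)-3)/2)) 2, ← Real.rpow_mul hφs]
            congr 1
            push_cast
            ring
          have h4 : φ s ^ ((k:ℝ)-3) ≤ φ t ^ ((k:ℝ)-3) :=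
            Real.rpow_le_rpow hφs hφst hφk3
          have h5 : 0 ≤ φ s ^ ((k:ℝ)-3) := Real.rpow_nonneg hφs _
          have hcat : (0:ℝ) ≤ (catalan (k-2):ℝ)^2 := sq_nonneg _
          rw [mul_pow, mul_pow, h3, hC1]
          calc (catalan (k-2):ℝ)^2 * (-(Q 2 s))^2 * φ s ^ ((k:ℝ)-3)
              = (catalan (k-2):ℝ)^2 * ((-(Q 2 s)) * ((-(Q 2 s)) * φ s ^ ((k:ℝ)-3))) := by
                ring
            _ ≤ (catalan (k-2):ℝ)^2 * ((-(Q 2 s)) * ((-(Q 2 t)) * φ t ^ ((k:ℝ)-3))) := by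
                apply mul_le_mul_of_nonneg_left
                  (mul_le_mul_of_nonneg_left (mul_le_mul hast h4 h5 hat) has) hcat
            _ = (catalan (k-2):ℝ)^2 * ((-(Q 2 t)) * φ t ^ ((k:ℝ)-3)) * (-(Q 2 s)) := by
                ring
        calc ∫ s in t..R, Q (k-1) s ^ 2
            ≤ ∫ s in t..R, C1 * (-(Q 2 s)) := by
              apply intervalIntegral.integral_mono_on hR ?_ ?_ hpt
              · exact hInt _ ((hQC (k-1) (by omega)).pow 2) t R ht (ht.trans hR)
              · exact hInt _ (continuousOn_const.mul (hQC 2 one_le_two).neg) t R ht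
                  (ht.trans hR)
          _ = C1 * ∫ s in t..R, -(Q 2 s) := intervalIntegral.integral_const_mul _ _
          _ ≤ C1 * φ t := mul_le_mul_of_nonneg_left (hφtail t ht R hR) hC1n
      have hφe2 : (φ t ^ e)^2 = φ t ^ ((k:ℝ) - 2) := by
        rw [← Real.rpow_natCast (φ t ^ e) 2, ← Real.rpow_mul hφt, he_def]
        congr 1
        push_cast
        ring
      have hφ31 : φ t ^ ((k:ℝ)-3) * φ t = φ t ^ ((k:ℝ)-2) := by
        rw [show (k:ℝ)-2 = ((k:ℝ)-3) + 1 by ring,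
          Real.rpow_add_of_nonneg hφt hφk3 zero_le_one, Real.rpow_one]
      have hCS : ∫ s in t..R, |Q 1 s * Q (k-1) s| ≤
          (catalan (k-2) : ℝ) * ((-(Q 2 t)) * φ t ^ e) := by
        have h0 := my_integral_abs_mul_le hR ((hQC 1 le_rfl).mono hIccsub)
          ((hQC (k-1) (by omega)).mono hIccsub)
        refine h0.trans ?_
        have s1 : Real.sqrt (∫ s in t..R, Q 1 s ^ 2) ≤ Real.sqrt (-(Q 2 t)) :=
          Real.sqrt_le_sqrt hQ1sq
        have s2 : Real.sqrt (∫ s in t..R, Q (k-1) s ^ 2) ≤ Real.sqrt (C1 * φ t) :=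
          Real.sqrt_le_sqrt hQk1sq
        calc Real.sqrt (∫ s in t..R, Q 1 s ^ 2) * Real.sqrt (∫ s in t..R, Q (k-1) s ^ 2)
            ≤ Real.sqrt (-(Q 2 t)) * Real.sqrt (C1 * φ t) :=
              mul_le_mul s1 s2 (Real.sqrt_nonneg _) (Real.sqrt_nonneg _)
          _ = Real.sqrt ((-(Q 2 t)) * (C1 * φ t)) := (Real.sqrt_mul hat _).symm
          _ = (catalan (k-2) : ℝ) * ((-(Q 2 t)) * φ t ^ e) := by
              rw [show (-(Q 2 t)) * (C1 * φ t)
                  = ((catalan (k-2):ℝ) * ((-(Q 2 t)) * φ t ^ e))^2 from ?_]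
              · exact Real.sqrt_sq (mul_nonneg (Nat.cast_nonneg _)
                  (mul_nonneg hat (Real.rpow_nonneg hφt _)))
              · rw [hC1]
                have hrh : ((catalan (k-2):ℝ) * ((-(Q 2 t)) * φ t ^ e))^2
                    = (catalan (k-2):ℝ)^2 * ((-(Q 2 t))^2 * (φ t ^ e)^2) := by ring
                rw [hrh, hφe2, ← hφ31]
                ring
      have hmid : ∀ j, 2 ≤ j → j + 2 ≤ k → ∫ s in t..R, |Q j s * Q (k-j) s| ≤
          (catalan (j-1) : ℝ) * (catalan (k-j-1) : ℝ) * ((-(Q 2 t)) * φ t ^ e) := by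
        intro j hj2 hjk
        have hkj2 : 2 ≤ k - j := by omega
        have hk4 : 4 ≤ k := by omega
        have hkR4 : (4:ℝ) ≤ (k:ℝ) := by exact_mod_cast hk4
        have hjR : (2:ℝ) ≤ (j:ℝ) := by exact_mod_cast hj2
        have hjkR : (j:ℝ) + 2 ≤ (k:ℝ) := by exact_mod_cast hjk
        have hkjcast : ((k-j:ℕ):ℝ) = (k:ℝ) - (j:ℝ) := by
          rw [Nat.cast_sub (by omega : j ≤ k)]
        have hejn : (0:ℝ) ≤ ((j:ℝ) - 2)/2 := div_nonneg (by linarith) (by norm_num)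
        have hekjn : (0:ℝ) ≤ (((k-j:ℕ):ℝ) - 2)/2 := by
          rw [hkjcast]
          exact div_nonneg (by linarith) (by norm_num)
        have he4 : (0:ℝ) ≤ ((k:ℝ) - 4)/2 := div_nonneg (by linarith) (by norm_num)
        set C2 : ℝ := (catalan (j-1) : ℝ) * (catalan (k-j-1) : ℝ) *
          ((-(Q 2 t)) * φ t ^ (((k:ℝ)-4)/2)) with hC2def
        have hC2n : 0 ≤ C2 := mul_nonneg
          (mul_nonneg (Nat.cast_nonneg _) (Nat.cast_nonneg _))
          (mul_nonneg hat (Real.rpow_nonneg hφt _))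
        have hpt : ∀ s ∈ Set.Icc t R, |Q j s * Q (k-j) s| ≤ C2 * (-(Q 2 s)) := by
          intro s hs
          have hsT : T ≤ s := ht.trans hs.1
          have has : 0 ≤ -(Q 2 s) := by have := hQ2le s hsT; linarith
          have hast : -(Q 2 s) ≤ -(Q 2 t) := by have := hQ2mono t ht s hs.1; linarith
          have hφs : 0 ≤ φ s := hφnonneg s hsT
          have hφst : φ s ≤ φ t := hφmono t ht s hs.1
          have h1 := ih j (by omega) hj2 s hsT
          have h2 := ih (k-j) (by omega) hkj2 s hsT
          have hb1 : 0 ≤ (catalan (j-1):ℝ) * (-(Q 2 s)) * φ s ^ (((j:ℝ) - 2)/2) :=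
            mul_nonneg (mul_nonneg (Nat.cast_nonneg _) has) (Real.rpow_nonneg hφs _)
          have h4 : φ s ^ (((k:ℝ)-4)/2) ≤ φ t ^ (((k:ℝ)-4)/2) :=
            Real.rpow_le_rpow hφs hφst he4
          have h5 : 0 ≤ φ s ^ (((k:ℝ)-4)/2) := Real.rpow_nonneg hφs _
          have hcc : 0 ≤ (catalan (j-1):ℝ) * (catalan (k-j-1):ℝ) :=
            mul_nonneg (Nat.cast_nonneg _) (Nat.cast_nonneg _)
          rw [abs_mul]
          calc |Q j s| * |Q (k-j) s|
              ≤ ((catalan (j-1):ℝ) * (-(Q 2 s)) * φ s ^ (((j:ℝ) - 2)/2)) *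
                ((catalan (k-j-1):ℝ) * (-(Q 2 s)) * φ s ^ ((((k-j:ℕ):ℝ) - 2)/2)) :=
                mul_le_mul h1 h2 (abs_nonneg _) hb1
            _ = (catalan (j-1):ℝ) * (catalan (k-j-1):ℝ) * ((-(Q 2 s)) * (-(Q 2 s))) *
                (φ s ^ (((j:ℝ) - 2)/2) * φ s ^ ((((k-j:ℕ):ℝ) - 2)/2)) := by ring
            _ = (catalan (j-1):ℝ) * (catalan (k-j-1):ℝ) * ((-(Q 2 s)) * (-(Q 2 s))) *
                φ s ^ (((k:ℝ)-4)/2) := by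
                rw [← Real.rpow_add_of_nonneg hφs hejn hekjn]
                congr 1
                rw [hkjcast]
                ring
            _ = ((catalan (j-1):ℝ) * (catalan (k-j-1):ℝ)) *
                (((-(Q 2 s)) * φ s ^ (((k:ℝ)-4)/2)) * (-(Q 2 s))) := by ring
            _ ≤ ((catalan (j-1):ℝ) * (catalan (k-j-1):ℝ)) *
                (((-(Q 2 t)) * φ t ^ (((k:ℝ)-4)/2)) * (-(Q 2 s))) := by
                exact mul_le_mul_of_nonneg_left
                  (mul_le_mul_of_nonneg_right (mul_le_mul hast h4 h5 hat) has) hcc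
            _ = C2 * (-(Q 2 s)) := by rw [hC2def]; ring
        have hint1 : IntervalIntegrable (fun s => |Q j s * Q (k-j) s|) volume t R :=
          (hInt _ (hcontQQ j (by omega) (by omega)) t R ht (ht.trans hR)).abs
        have hint2 : IntervalIntegrable (fun s => C2 * (-(Q 2 s))) volume t R :=
          hInt _ (continuousOn_const.mul (hQC 2 one_le_two).neg) t R ht (ht.trans hR)
        calc ∫ s in t..R, |Q j s * Q (k-j) s| ≤ ∫ s in t..R, C2 * (-(Q 2 s)) :=
              intervalIntegral.integral_mono_on hR hint1 hint2 hpt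
          _ = C2 * ∫ s in t..R, -(Q 2 s) := intervalIntegral.integral_const_mul _ _
          _ ≤ C2 * φ t := mul_le_mul_of_nonneg_left (hφtail t ht R hR) hC2n
          _ = (catalan (j-1) : ℝ) * (catalan (k-j-1) : ℝ) * ((-(Q 2 t)) * φ t ^ e) := by
              rw [hC2def, show e = ((k:ℝ)-4)/2 + 1 by rw [he_def]; ring,
                Real.rpow_add_of_nonneg hφt he4 zero_le_one, Real.rpow_one]
              ring
      have hterm : ∀ j ∈ Finset.Ico 1 k, ∫ s in t..R, |Q j s * Q (k-j) s| ≤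
          (catalan (j-1) : ℝ) * (catalan (k-j-1) : ℝ) * ((-(Q 2 t)) * φ t ^ e) := by
        intro j hj
        rw [Finset.mem_Ico] at hj
        rcases eq_or_ne j 1 with rfl | hj1
        · rw [show (1:ℕ) - 1 = 0 from rfl, catalan_zero, show k - 1 - 1 = k - 2 by omega]
          calc ∫ s in t..R, |Q 1 s * Q (k-1) s|
              ≤ (catalan (k-2) : ℝ) * ((-(Q 2 t)) * φ t ^ e) := hCS
            _ = ((1:ℕ):ℝ) * (catalan (k-2) : ℝ) * ((-(Q 2 t)) * φ t ^ e) := by norm_num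
        rcases eq_or_ne j (k-1) with rfl | hjk1
        · rw [show k - (k-1) = 1 by omega, show (1:ℕ) - 1 = 0 from rfl, catalan_zero,
            show k - 1 - 1 = k - 2 by omega]
          have hcomm : ∫ s in t..R, |Q (k-1) s * Q 1 s|
              = ∫ s in t..R, |Q 1 s * Q (k-1) s| :=
            intervalIntegral.integral_congr (fun s _ => by rw [mul_comm])
          rw [hcomm]
          calc ∫ s in t..R, |Q 1 s * Q (k-1) s|
              ≤ (catalan (k-2) : ℝ) * ((-(Q 2 t)) * φ t ^ e) := hCS
            _ = (catalan (k-2) : ℝ) * ((1:ℕ):ℝ) * ((-(Q 2 t)) * φ t ^ e) := by norm_num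
        · exact hmid j (by omega) (by omega)
      have hsum_cat : ∑ j ∈ Finset.Ico 1 k, (catalan (j-1) : ℝ) * (catalan (k-j-1) : ℝ)
          = (catalan (k-1) : ℝ) := by
        have h := my_catalan_conv k hk2
        have h2 : ((∑ j ∈ Finset.Ico 1 k, catalan (j-1) * catalan (k-j-1) : ℕ) : ℝ)
            = ((catalan (k-1) : ℕ) : ℝ) := by exact_mod_cast h
        push_cast at h2
        exact h2
      calc |∫ s in t..R, q k s|
          = |∑ j ∈ Finset.Ico 1 k, ∫ s in t..R, Q j s * Q (k-j) s| := by rw [hsplit]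
        _ ≤ ∑ j ∈ Finset.Ico 1 k, |∫ s in t..R, Q j s * Q (k-j) s| :=
            Finset.abs_sum_le_sum_abs _ _
        _ ≤ ∑ j ∈ Finset.Ico 1 k, ∫ s in t..R, |Q j s * Q (k-j) s| := by
            refine Finset.sum_le_sum fun j hj => ?_
            exact intervalIntegral.abs_integral_le_integral_abs hR
        _ ≤ ∑ j ∈ Finset.Ico 1 k,
            (catalan (j-1) : ℝ) * (catalan (k-j-1) : ℝ) * ((-(Q 2 t)) * φ t ^ e) :=
            Finset.sum_le_sum hterm
        _ = (∑ j ∈ Finset.Ico 1 k, (catalan (j-1) : ℝ) * (catalan (k-j-1) : ℝ)) *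
            ((-(Q 2 t)) * φ t ^ e) := by rw [← Finset.sum_mul]
        _ = (catalan (k-1) : ℝ) * ((-(Q 2 t)) * φ t ^ e) := by rw [hsum_cat]
        _ = (catalan (k-1) : ℝ) * (-(Q 2 t)) * φ t ^ e := by ring
  -- conclude
  intro t ht
  refine ⟨hQ2le t ht, fun k hk => ?_⟩
  refine (main k hk t ht).trans ?_
  have h1 : (catalan (k - 1) : ℝ) ≤ 4 ^ (k - 1) := by
    exact_mod_cast my_catalan_le_four_pow (k - 1)
  have h2 : 0 ≤ -(Q 2 t) := by have := hQ2le t ht; linarith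
  have h3 : 0 ≤ φ t ^ (((k : ℝ) - 2) / 2) := Real.rpow_nonneg (hφnonneg t ht) _
  exact mul_le_mul_of_nonneg_right (mul_le_mul_of_nonneg_right h1 h2) h3
end

section
/- Let T ≥ 0 and let Q₁ : [T,∞) → ℝ be continuous with ∫_t^∞ Q₁(s)² ds < ∞ for every t ≥ T. Set Q₂(t) := −∫_t^∞ Q₁(s)² ds and φ(t) := −∫_t^∞ Q₂(s) ds, assumed finite for every t ≥ T. Then for every integer m ≥ 1 and every t ≥ T one has ∫_t^∞ Q₂(s)² φ(s)^{m−1} ds ≤ (−Q₂(t)) φ(t)^m / m. -/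
open MeasureTheory Filter Topology

/-- Auxiliary: basic facts about `F u = -∫_{u}^∞ f` when `f` is continuous on `[T,∞)`
and integrable on `(T,∞)`. -/
lemma aux_tail_integral (T : ℝ) (f F : ℝ → ℝ)
    (hc : ContinuousOn f (Set.Ici T)) (hi : IntegrableOn f (Set.Ioi T))
    (hF : ∀ u ≥ T, F u = -∫ s in Set.Ioi u, f s) :
    (∀ x, T < x → HasDerivAt F (f x) x) ∧ ContinuousOn F (Set.Ici T) ∧
      Tendsto F atTop (𝓝 0) := by
  set A : ℝ := ∫ s in Set.Ioi T, f s with hA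
  set P : ℝ → ℝ := fun u => ∫ s in T..u, f s with hP
  have hrep : ∀ u ≥ T, F u = P u - A := by
    intro u hu
    have hsplit : A = (∫ s in Set.Ioc T u, f s) + ∫ s in Set.Ioi u, f s := by
      rw [hA, ← Set.Ioc_union_Ioi_eq_Ioi hu,
        setIntegral_union (Set.Ioc_disjoint_Ioi le_rfl) measurableSet_Ioi
          (hi.mono_set Set.Ioc_subset_Ioi_self)
          (hi.mono_set (Set.Ioi_subset_Ioi hu))]
    have : P u = ∫ s in Set.Ioc T u, f s := intervalIntegral.integral_of_le hu
    rw [hF u hu, this]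
    linarith [hsplit]
  have hPderiv : ∀ x, T < x → HasDerivAt P (f x) x := by
    intro x hx
    refine intervalIntegral.integral_hasDerivAt_right ?_ ?_ ?_
    · rw [intervalIntegrable_iff_integrableOn_Ioc_of_le hx.le]
      exact hi.mono_set Set.Ioc_subset_Ioi_self
    · exact ContinuousAt.stronglyMeasurableAtFilter isOpen_Ioi
        (fun y hy => hc.continuousAt (Ici_mem_nhds hy)) x hx
    · exact hc.continuousAt (Ici_mem_nhds hx)
  have hderiv : ∀ x, T < x → HasDerivAt F (f x) x := by
    intro x hx
    have h1 : HasDerivAt (fun u => P u - A) (f x) x := (hPderiv x hx).sub_const A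
    refine h1.congr_of_eventuallyEq ?_
    exact Filter.eventuallyEq_of_mem (Ici_mem_nhds hx) (fun u hu => hrep u hu)
  have hPcontT : ContinuousWithinAt P (Set.Ici T) T := by
    have hI : IntervalIntegrable f volume (min T T) (max T (T + 1)) := by
      rw [min_self, max_eq_right (by linarith : T ≤ T + 1),
        intervalIntegrable_iff_integrableOn_Ioc_of_le (by linarith : T ≤ T + 1)]
      exact hi.mono_set Set.Ioc_subset_Ioi_self
    have h0 : ContinuousWithinAt P (Set.Icc T (T + 1)) T :=
      intervalIntegral.continuousWithinAt_primitive (measure_singleton T) hI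
    refine h0.mono_of_mem_nhdsWithin ?_
    rw [← Set.Ici_inter_Iic]
    exact Filter.inter_mem self_mem_nhdsWithin
      (mem_nhdsWithin_of_mem_nhds (Iic_mem_nhds (by linarith)))
  have hcontOn : ContinuousOn F (Set.Ici T) := by
    intro x hx
    rcases eq_or_lt_of_le (Set.mem_Ici.mp hx) with h | h
    · subst h
      exact (hPcontT.sub continuousWithinAt_const).congr
        (fun y hy => hrep y hy) (hrep T le_rfl)
    · exact (hderiv x h).continuousAt.continuousWithinAt
  have htend : Tendsto F atTop (𝓝 0) := by
    have h1 : Tendsto P atTop (𝓝 A) :=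
      intervalIntegral_tendsto_integral_Ioi T hi tendsto_id
    have h2 : Tendsto (fun u => P u - A) atTop (𝓝 (A - A)) := h1.sub_const A
    rw [sub_self] at h2
    refine h2.congr' ?_
    filter_upwards [eventually_ge_atTop T] with u hu
    exact (hrep u hu).symm
  exact ⟨hderiv, hcontOn, htend⟩

/-- Key integral estimate in the proof of Lemma 3.2: with
`Q₂(t) = -∫_t^∞ Q₁(s)² ds` and `φ(t) = -∫_t^∞ Q₂(s) ds`, one has
`∫_t^∞ Q₂(s)² φ(s)^(m-1) ds ≤ (-Q₂(t)) φ(t)^m / m` for every `m ≥ 1`. -/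
theorem integral_estimate_Q2_phi
    (T : ℝ) (hT : 0 ≤ T)
    (Q₁ : ℝ → ℝ) (hQ₁c : ContinuousOn Q₁ (Set.Ici T))
    (hQ₁i : ∀ t ≥ T, IntegrableOn (fun s => Q₁ s ^ 2) (Set.Ioi t))
    (Q₂ φ : ℝ → ℝ)
    (hQ₂ : ∀ t ≥ T, Q₂ t = -∫ s in Set.Ioi t, Q₁ s ^ 2)
    (hQ₂i : ∀ t ≥ T, IntegrableOn Q₂ (Set.Ioi t))
    (hφ : ∀ t ≥ T, φ t = -∫ s in Set.Ioi t, Q₂ s) :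
    ∀ m : ℕ, 1 ≤ m → ∀ t ≥ T,
      IntegrableOn (fun s => Q₂ s ^ 2 * φ s ^ (m - 1)) (Set.Ioi t) ∧
      ∫ s in Set.Ioi t, Q₂ s ^ 2 * φ s ^ (m - 1)
        ≤ (-(Q₂ t)) * φ t ^ m / m := by
  -- Facts about Q₂
  obtain ⟨hQ₂deriv, hQ₂cont, hQ₂tend⟩ :=
    aux_tail_integral T (fun s => Q₁ s ^ 2) Q₂ (hQ₁c.pow 2) (hQ₁i T le_rfl) hQ₂
  -- Facts about φ
  obtain ⟨hφderiv, hφcont, hφtend⟩ :=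
    aux_tail_integral T Q₂ φ hQ₂cont (hQ₂i T le_rfl) hφ
  -- Sign facts
  have hQ₂nonpos : ∀ s, T ≤ s → Q₂ s ≤ 0 := by
    intro s hs
    rw [hQ₂ s hs, neg_nonpos]
    exact setIntegral_nonneg measurableSet_Ioi (fun x _ => sq_nonneg _)
  have hQ₂anti : ∀ a b, T ≤ a → a ≤ b → Q₂ a ≤ Q₂ b := by
    intro a b ha hab
    rw [hQ₂ a ha, hQ₂ b (ha.trans hab), neg_le_neg_iff]
    refine setIntegral_mono_set (hQ₁i a ha) ?_ ?_
    · exact Filter.Eventually.of_forall (fun x => sq_nonneg _)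
    · exact (Set.Ioi_subset_Ioi hab).eventuallyLE
  have hφnn : ∀ s, T ≤ s → 0 ≤ φ s := by
    intro s hs
    rw [hφ s hs, ← integral_neg]
    exact setIntegral_nonneg measurableSet_Ioi
      (fun x hx => by simpa using hQ₂nonpos x (hs.trans hx.le))
  intro m hm t ht
  have hmR : (0 : ℝ) < m := by exact_mod_cast hm
  -- The function g with derivative g'
  set g : ℝ → ℝ := fun x => -(φ x ^ m) / m with hg
  set g' : ℝ → ℝ := fun x => (-Q₂ x) * φ x ^ (m - 1) with hg'
  have hgderiv : ∀ x ∈ Set.Ioi t, HasDerivAt g (g' x) x := by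
    intro x hx
    have hxT : T < x := lt_of_le_of_lt ht hx
    have h1 : HasDerivAt (fun u => φ u ^ m) ((m : ℝ) * φ x ^ (m - 1) * Q₂ x) x :=
      (hφderiv x hxT).pow m
    have h2 : HasDerivAt g (-((m : ℝ) * φ x ^ (m - 1) * Q₂ x) / m) x :=
      (h1.neg).div_const m
    convert h2 using 1
    field_simp [hg']
    ring
  have hg'nonneg : ∀ x ∈ Set.Ioi t, 0 ≤ g' x := by
    intro x hx
    have hxT : T ≤ x := ht.trans hx.le
    exact mul_nonneg (by linarith [hQ₂nonpos x hxT]) (pow_nonneg (hφnn x hxT) _)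
  have hgcont : ContinuousWithinAt g (Set.Ici t) t := by
    have h1 : ContinuousWithinAt φ (Set.Ici t) t :=
      (hφcont t ht).mono (Set.Ici_subset_Ici.2 ht)
    exact ((h1.pow m).neg).div_const m
  have hgtend : Tendsto g atTop (𝓝 0) := by
    have h1 : Tendsto (fun u => -(φ u ^ m) / m) atTop (𝓝 (-(0 ^ m : ℝ) / m)) :=
      ((hφtend.pow m).neg).div_const m
    rw [zero_pow (by omega : m ≠ 0), neg_zero, zero_div] at h1
    exact h1
  have keyInt : IntegrableOn g' (Set.Ioi t) :=
    integrableOn_Ioi_deriv_of_nonneg hgcont hgderiv hg'nonneg hgtend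
  have keyVal : ∫ x in Set.Ioi t, g' x = φ t ^ m / m := by
    have := integral_Ioi_of_hasDerivAt_of_nonneg hgcont hgderiv hg'nonneg hgtend
    rw [this, hg]
    ring
  -- The dominating function
  have hDint : IntegrableOn (fun x => (-Q₂ t) * g' x) (Set.Ioi t) := keyInt.const_mul _
  have hbound : ∀ s ∈ Set.Ioi t, Q₂ s ^ 2 * φ s ^ (m - 1) ≤ (-Q₂ t) * g' s := by
    intro s hs
    have hsT : T ≤ s := ht.trans hs.le
    have h1 : Q₂ s ^ 2 * φ s ^ (m - 1) = (-Q₂ s) * g' s := by rw [hg']; ring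
    rw [h1]
    exact mul_le_mul_of_nonneg_right (by linarith [hQ₂anti t s ht hs.le])
      (hg'nonneg s hs)
  have hhnn : ∀ s ∈ Set.Ioi t, 0 ≤ Q₂ s ^ 2 * φ s ^ (m - 1) := by
    intro s hs
    exact mul_nonneg (sq_nonneg _) (pow_nonneg (hφnn s (ht.trans hs.le)) _)
  have hmeas : AEStronglyMeasurable (fun s => Q₂ s ^ 2 * φ s ^ (m - 1))
      (volume.restrict (Set.Ioi t)) := by
    have hsub : Set.Ioi t ⊆ Set.Ici T := fun x hx => ht.trans hx.le
    exact (((hQ₂cont.mono hsub).pow 2).mul ((hφcont.mono hsub).pow (m - 1))).aestronglyMeasurable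
      measurableSet_Ioi
  have hint : IntegrableOn (fun s => Q₂ s ^ 2 * φ s ^ (m - 1)) (Set.Ioi t) := by
    refine Integrable.mono hDint hmeas ?_
    rw [ae_restrict_iff' measurableSet_Ioi]
    filter_upwards with s hs
    rw [Real.norm_eq_abs, Real.norm_eq_abs, abs_of_nonneg (hhnn s hs),
      abs_of_nonneg (le_trans (hhnn s hs) (hbound s hs))]
    exact hbound s hs
  refine ⟨hint, ?_⟩
  calc ∫ s in Set.Ioi t, Q₂ s ^ 2 * φ s ^ (m - 1)
      ≤ ∫ s in Set.Ioi t, (-Q₂ t) * g' s :=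
        setIntegral_mono_on hint hDint measurableSet_Ioi hbound
    _ = (-Q₂ t) * ∫ s in Set.Ioi t, g' s := integral_const_mul _ _
    _ = (-(Q₂ t)) * φ t ^ m / m := by rw [keyVal]; ring
end

section
/- Let T ≥ 0, let 0 < α ≤ 1 and β with 2β ≥ α + 1, and let b : [T,∞) → ℝ be continuously differentiable. Suppose there are constants b₀, b₁, b₂ > 0 such that for all T ≤ s ≤ t: |∫_s^t b(σ) dσ| ≤ b₀, |b(t)| ≤ b₁(1+t)^{−α}, and |b'(t)| ≤ b₂(1+t)^{−2β}. Then there exist constants N ≥ 2b₁ and K₁ > 0 such that for every r > 0 and every twice continuously differentiable solution w : [T,∞) → ℂ of w''(t) + r² w(t) + 2b(t) w'(t) = 0, setting t_r := max{T, (N r^{−1})^{1/α} − 1} and |W(t)|² := |w'(t)|² + r²|w(t)|², one has K₁^{−1} |W(t_r)| ≤ |W(t)| ≤ K₁ |W(t_r)| for all t ≥ t_r, with K₁ independent of r and of w. -/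
open MeasureTheory Filter Topology

local notation "⟪" x ", " y "⟫" => @inner ℝ ℂ _ x y

lemma hasDerivWithinAt_ofReal_comp' {f : ℝ → ℝ} {u x : ℝ} {s : Set ℝ}
    (hf : HasDerivWithinAt f u s x) :
    HasDerivWithinAt (fun y => ((f y : ℝ) : ℂ)) (u : ℂ) s x := by
  simpa [Function.comp_def] using Complex.ofRealCLM.hasFDerivAt.comp_hasDerivWithinAt x hf

lemma gronwall_aux' {a : ℝ} {G g H h : ℝ → ℝ}
    (hGd : ∀ t ∈ Set.Ici a, HasDerivWithinAt G (g t) (Set.Ici a) t)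
    (hHd : ∀ t ∈ Set.Ici a, HasDerivWithinAt H (h t) (Set.Ici a) t)
    (hbound : ∀ t ∈ Set.Ici a, |g t| ≤ h t * G t) :
    ∀ t ∈ Set.Ici a, G t ≤ G a * Real.exp (H t - H a) ∧ G a ≤ G t * Real.exp (H t - H a) := by
  set φ : ℝ → ℝ := fun t => G t * Real.exp (-H t) with hφ
  set ψ : ℝ → ℝ := fun t => G t * Real.exp (H t) with hψ
  have hφd : ∀ t ∈ Set.Ici a, HasDerivWithinAt φ
      (g t * Real.exp (-H t) + G t * (Real.exp (-H t) * -h t)) (Set.Ici a) t :=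
    fun t ht => (hGd t ht).mul ((hHd t ht).neg.exp)
  have hψd : ∀ t ∈ Set.Ici a, HasDerivWithinAt ψ
      (g t * Real.exp (H t) + G t * (Real.exp (H t) * h t)) (Set.Ici a) t :=
    fun t ht => (hGd t ht).mul ((hHd t ht).exp)
  have hφa : AntitoneOn φ (Set.Ici a) := by
    apply antitoneOn_of_deriv_nonpos (convex_Ici a)
      (fun t ht => (hφd t ht).continuousWithinAt)
    · intro x hx
      rw [interior_Ici] at hx
      exact ((hφd x (Set.Ioi_subset_Ici_self hx)).hasDerivAt (Ici_mem_nhds hx)).differentiableAt.differentiableWithinAt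
    · intro x hx
      rw [interior_Ici] at hx
      rw [((hφd x (Set.Ioi_subset_Ici_self hx)).hasDerivAt (Ici_mem_nhds hx)).deriv]
      have hb := abs_le.1 (hbound x (Set.Ioi_subset_Ici_self hx))
      nlinarith [Real.exp_pos (-H x), hb.2]
  have hψm : MonotoneOn ψ (Set.Ici a) := by
    apply monotoneOn_of_deriv_nonneg (convex_Ici a)
      (fun t ht => (hψd t ht).continuousWithinAt)
    · intro x hx
      rw [interior_Ici] at hx
      exact ((hψd x (Set.Ioi_subset_Ici_self hx)).hasDerivAt (Ici_mem_nhds hx)).differentiableAt.differentiableWithinAt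
    · intro x hx
      rw [interior_Ici] at hx
      rw [((hψd x (Set.Ioi_subset_Ici_self hx)).hasDerivAt (Ici_mem_nhds hx)).deriv]
      have hb := abs_le.1 (hbound x (Set.Ioi_subset_Ici_self hx))
      nlinarith [Real.exp_pos (H x), hb.1]
  intro t ht
  have h1 : φ t ≤ φ a := hφa Set.self_mem_Ici ht ht
  have h2 : ψ a ≤ ψ t := hψm Set.self_mem_Ici ht ht
  constructor
  · calc G t = G t * Real.exp (-H t) * Real.exp (H t) := by
          rw [mul_assoc, ← Real.exp_add]; simp
      _ ≤ G a * Real.exp (-H a) * Real.exp (H t) :=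
          mul_le_mul_of_nonneg_right h1 (Real.exp_pos _).le
      _ = G a * Real.exp (H t - H a) := by
          rw [mul_assoc, ← Real.exp_add, neg_add_eq_sub]
  · calc G a = G a * Real.exp (H a) * Real.exp (-H a) := by
          rw [mul_assoc, ← Real.exp_add]; simp
      _ ≤ G t * Real.exp (H t) * Real.exp (-H a) :=
          mul_le_mul_of_nonneg_right h2 (Real.exp_pos _).le
      _ = G t * Real.exp (H t - H a) := by
          rw [mul_assoc, ← Real.exp_add, ← sub_eq_add_neg]

lemma energy_compare_aux {X Y Z c r : ℝ} (hX : 0 ≤ X) (hY : 0 ≤ Y) (hZ : 0 ≤ Z)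
    (hc : 0 ≤ c) (hb2 : c ^ 2 ≤ r ^ 2 / 4) (ht1 : Z ≤ X + c * Y) (ht2 : X ≤ Z + c * Y) :
    X ^ 2 + r ^ 2 * Y ^ 2 ≤ 2 * (Z ^ 2 + (r ^ 2 - c ^ 2) * Y ^ 2) ∧
    Z ^ 2 + (r ^ 2 - c ^ 2) * Y ^ 2 ≤ 2 * (X ^ 2 + r ^ 2 * Y ^ 2) ∧
    0 ≤ Z ^ 2 + (r ^ 2 - c ^ 2) * Y ^ 2 := by
  have h1 : X ^ 2 ≤ (Z + c * Y) ^ 2 := by nlinarith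
  have h2 : Z ^ 2 ≤ (X + c * Y) ^ 2 := by nlinarith
  refine ⟨?_, ?_, ?_⟩
  · nlinarith [sq_nonneg (Z - c * Y), sq_nonneg Y]
  · nlinarith [sq_nonneg (X - c * Y), sq_nonneg Y]
  · nlinarith [sq_nonneg Z, sq_nonneg Y]

lemma gbound_aux {X Y I Ba B'a q G r b₂ : ℝ}
    (hr : 0 < r) (hq : 0 ≤ q) (hG : 0 ≤ G) (hXn : 0 ≤ X) (hYn : 0 ≤ Y)
    (hI : |I| ≤ X * Y) (hBa : 0 ≤ Ba) (hB'a : 0 ≤ B'a)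
    (hbhalf : Ba ≤ r / 2) (hb'le : B'a ≤ b₂ * q) (hb₂ : 0 < b₂)
    (hGX : 3 / 4 * r ^ 2 * X ^ 2 ≤ G) (hGY : Y ^ 2 ≤ G) :
    (2 * B'a * |I| + 2 * Ba * B'a * X ^ 2) * r ≤ 4 * b₂ * q * G := by
  have hIa : 0 ≤ |I| := abs_nonneg I
  have k1 : 2 * r * (X * Y) ≤ r ^ 2 * X ^ 2 + Y ^ 2 := by nlinarith [sq_nonneg (r * X - Y)]
  have t1 : 2 * B'a * |I| * r ≤ B'a * (r ^ 2 * X ^ 2 + Y ^ 2) := by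
    have u1 := mul_le_mul_of_nonneg_left hI (by positivity : (0:ℝ) ≤ 2 * B'a * r)
    have u2 := mul_le_mul_of_nonneg_left k1 hB'a
    nlinarith
  have t2 : 2 * Ba * B'a * X ^ 2 * r ≤ B'a * (r ^ 2 * X ^ 2) := by
    have u1 := mul_le_mul_of_nonneg_right hbhalf
      (by positivity : (0:ℝ) ≤ 2 * B'a * X ^ 2)
    nlinarith [sq_nonneg X]
  have t3 : r ^ 2 * X ^ 2 + Y ^ 2 + r ^ 2 * X ^ 2 ≤ 11 / 3 * G := by linarith
  have t4 := mul_le_mul_of_nonneg_left t3 hB'a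
  have t5 : 11 / 3 * B'a * G ≤ 11 / 3 * (b₂ * q) * G := by
    have := mul_le_mul_of_nonneg_right hb'le hG
    nlinarith
  nlinarith [hb₂.le, mul_nonneg hq hG]

set_option maxHeartbeats 2000000 in
/-- Proposition 3.4 (estimate in the hyperbolic zone `Z_H`), case `α > 0`:
for `t ≥ t_r = max{T, (N r⁻¹)^(1/α) - 1}`, the energy
`|W(t)| = √(|w'(t)|² + r²|w(t)|²)` of a solution of `w'' + r²w + 2bw' = 0`
is comparable to `|W(t_r)|`, uniformly in `r` and `w`. -/
theorem zone_ZH_estimate_pos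
    (T : ℝ) (hT : 0 ≤ T)
    (α β : ℝ) (hα0 : 0 < α) (hα1 : α ≤ 1) (hβ : α + 1 ≤ 2 * β)
    (b b' : ℝ → ℝ)
    (hbd : ∀ t ∈ Set.Ici T, HasDerivWithinAt b (b' t) (Set.Ici T) t)
    (hb'c : ContinuousOn b' (Set.Ici T))
    (b₀ b₁ b₂ : ℝ) (hb₀ : 0 < b₀) (hb₁ : 0 < b₁) (hb₂ : 0 < b₂)
    (hib : ∀ s t : ℝ, T ≤ s → s ≤ t → |∫ σ in s..t, b σ| ≤ b₀)
    (hb : ∀ t ≥ T, |b t| ≤ b₁ * (1 + t) ^ (-α))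
    (hb' : ∀ t ≥ T, |b' t| ≤ b₂ * (1 + t) ^ (-(2 * β))) :
    ∃ N : ℝ, 2 * b₁ ≤ N ∧ ∃ K₁ > (0:ℝ), ∀ r : ℝ, 0 < r →
      ∀ w w' w'' : ℝ → ℂ,
        (∀ t ∈ Set.Ici T, HasDerivWithinAt w (w' t) (Set.Ici T) t) →
        (∀ t ∈ Set.Ici T, HasDerivWithinAt w' (w'' t) (Set.Ici T) t) →
        ContinuousOn w'' (Set.Ici T) →
        (∀ t ≥ T, w'' t + (r : ℂ) ^ 2 * w t + 2 * (b t : ℂ) * w' t = 0) →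
        ∀ tr : ℝ, tr = max T ((N * r⁻¹) ^ (1 / α) - 1) →
          ∀ t ≥ tr,
            K₁⁻¹ * Real.sqrt (‖w' tr‖ ^ 2 + r ^ 2 * ‖w tr‖ ^ 2)
              ≤ Real.sqrt (‖w' t‖ ^ 2 + r ^ 2 * ‖w t‖ ^ 2) ∧
            Real.sqrt (‖w' t‖ ^ 2 + r ^ 2 * ‖w t‖ ^ 2)
              ≤ K₁ * Real.sqrt (‖w' tr‖ ^ 2 + r ^ 2 * ‖w tr‖ ^ 2) := by
  have hβ2 : (0:ℝ) < 2 * β - 1 := by linarith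
  set M : ℝ := 2 * b₂ / (b₁ * (2 * β - 1)) with hM
  have hM0 : 0 < M := by positivity
  refine ⟨2 * b₁, le_refl _, 2 * Real.exp (2 * b₀ + M), by positivity, ?_⟩
  set C : ℝ := 2 * Real.exp (2 * b₀ + M) with hC
  have hC0 : (0:ℝ) < C := by positivity
  intro r hr w w' w'' hw hw' hw''c hode tr htr t htt
  -- basic facts
  have hTtr : T ≤ tr := htr ▸ le_max_left _ _
  have h1tr : (0:ℝ) < 1 + tr := by linarith
  have hsub : Set.Ici tr ⊆ Set.Ici T := Set.Ici_subset_Ici.2 hTtr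
  have hzone : 2 * b₁ ≤ (1 + tr) ^ α * r := by
    have h0 : (0:ℝ) ≤ 2 * b₁ * r⁻¹ := by positivity
    have h1 : (2 * b₁ * r⁻¹) ^ (1 / α) ≤ 1 + tr := by
      have h2 : (2 * b₁ * r⁻¹) ^ (1 / α) - 1 ≤ tr := htr ▸ le_max_right _ _
      linarith
    have h2 : ((2 * b₁ * r⁻¹) ^ (1 / α)) ^ α ≤ (1 + tr) ^ α :=
      Real.rpow_le_rpow (Real.rpow_nonneg h0 _) h1 hα0.le
    rw [one_div, Real.rpow_inv_rpow h0 hα0.ne'] at h2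
    calc 2 * b₁ = 2 * b₁ * r⁻¹ * r := by field_simp
      _ ≤ (1 + tr) ^ α * r := mul_le_mul_of_nonneg_right h2 hr.le
  have hb_half : ∀ t ∈ Set.Ici tr, |b t| ≤ r / 2 := by
    intro t ht
    have ht' : tr ≤ t := ht
    have h1t : (0:ℝ) < 1 + t := by linarith
    have h1 : |b t| ≤ b₁ * (1 + t) ^ (-α) := hb t (hTtr.trans ht')
    have h2 : (1 + t) ^ (-α) ≤ (1 + tr) ^ (-α) :=
      Real.rpow_le_rpow_of_nonpos h1tr (by linarith) (by linarith)
    have hp : 0 < (1 + tr) ^ α := Real.rpow_pos_of_pos h1tr _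
    have h5 := mul_le_mul_of_nonneg_left hzone (inv_nonneg.2 hp.le)
    rw [← mul_assoc, ← mul_assoc, inv_mul_cancel₀ hp.ne', one_mul] at h5
    have h3 : (1 + tr) ^ (-α) ≤ r / (2 * b₁) := by
      rw [Real.rpow_neg h1tr.le, le_div_iff₀ (by positivity)]
      linarith
    calc |b t| ≤ b₁ * (1 + t) ^ (-α) := h1
      _ ≤ b₁ * (r / (2 * b₁)) := by
          apply mul_le_mul_of_nonneg_left (h2.trans h3) hb₁.le
      _ = r / 2 := by field_simp

  -- continuity and restricted derivatives
  have hbc : ContinuousOn b (Set.Ici T) := fun s hs => (hbd s hs).continuousWithinAt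
  have hbcR : ContinuousOn b (Set.Ici tr) := hbc.mono hsub
  have hwR : ∀ s ∈ Set.Ici tr, HasDerivWithinAt w (w' s) (Set.Ici tr) s :=
    fun s hs => (hw s (hsub hs)).mono hsub
  have hw'R : ∀ s ∈ Set.Ici tr, HasDerivWithinAt w' (w'' s) (Set.Ici tr) s :=
    fun s hs => (hw' s (hsub hs)).mono hsub
  have hbR : ∀ s ∈ Set.Ici tr, HasDerivWithinAt b (b' s) (Set.Ici tr) s :=
    fun s hs => (hbd s (hsub hs)).mono hsub
  -- the primitive of b
  obtain ⟨B, hBdef⟩ : ∃ B : ℝ → ℝ, B = fun s => ∫ σ in tr..s, b σ := ⟨_, rfl⟩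
  have hBint : ∀ s, tr ≤ s → IntervalIntegrable b volume tr s := by
    intro s hs
    apply ContinuousOn.intervalIntegrable
    apply hbcR.mono
    rw [Set.uIcc_of_le hs]
    exact Set.Icc_subset_Ici_self
  have hBd : ∀ s ∈ Set.Ici tr, HasDerivWithinAt B (b s) (Set.Ici tr) s := by
    intro s hs
    rw [hBdef]
    rcases eq_or_lt_of_le (Set.mem_Ici.1 hs) with rfl | hlt
    · exact intervalIntegral.integral_hasDerivWithinAt_right (hBint tr le_rfl)
        ⟨Set.Ici tr, Filter.mem_of_superset self_mem_nhdsWithin Set.Ioi_subset_Ici_self,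
          hbcR.aestronglyMeasurable measurableSet_Ici⟩
        ((hbcR tr Set.self_mem_Ici).mono Set.Ioi_subset_Ici_self)
    · exact (intervalIntegral.integral_hasDerivAt_right (hBint s hlt.le)
        ⟨Set.Ici tr, Ici_mem_nhds hlt, hbcR.aestronglyMeasurable measurableSet_Ici⟩
        ((hbcR s hlt.le).continuousAt (Ici_mem_nhds hlt))).hasDerivWithinAt
  have hBb : ∀ s ∈ Set.Ici tr, |B s| ≤ b₀ := by
    intro s hs
    rw [hBdef]
    exact hib tr s hTtr hs

  -- the transformed solution v = e^B w and its derivative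
  obtain ⟨c, hcdef⟩ : ∃ c : ℝ → ℂ, c = fun s => Complex.exp ((B s : ℂ)) := ⟨_, rfl⟩
  obtain ⟨v, hvdef⟩ : ∃ v : ℝ → ℂ, v = fun s => c s * w s := ⟨_, rfl⟩
  obtain ⟨v1, hv1def⟩ : ∃ v1 : ℝ → ℂ, v1 = fun s => c s * (w' s + (b s : ℂ) * w s) := ⟨_, rfl⟩
  have hcd : ∀ s ∈ Set.Ici tr, HasDerivWithinAt c (c s * (b s : ℂ)) (Set.Ici tr) s := by
    intro s hs
    simp only [hcdef]
    exact (hasDerivWithinAt_ofReal_comp' (hBd s hs)).cexp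
  have hvd : ∀ s ∈ Set.Ici tr, HasDerivWithinAt v (v1 s) (Set.Ici tr) s := by
    intro s hs
    have h := (hcd s hs).mul (hwR s hs)
    simp only [hvdef, hv1def]
    refine h.congr_deriv ?_
    ring
  have hv1d : ∀ s ∈ Set.Ici tr,
      HasDerivWithinAt v1 ((((b s) ^ 2 + b' s - r ^ 2 : ℝ) : ℂ) * v s) (Set.Ici tr) s := by
    intro s hs
    have hbw : HasDerivWithinAt (fun u => (b u : ℂ) * w u)
        ((b' s : ℂ) * w s + (b s : ℂ) * w' s) (Set.Ici tr) s :=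
      (hasDerivWithinAt_ofReal_comp' (hbR s hs)).mul (hwR s hs)
    have hin : HasDerivWithinAt (fun u => w' u + (b u : ℂ) * w u)
        (w'' s + ((b' s : ℂ) * w s + (b s : ℂ) * w' s)) (Set.Ici tr) s :=
      (hw'R s hs).add hbw
    have h := (hcd s hs).mul hin
    simp only [hvdef, hv1def]
    refine h.congr_deriv ?_
    have hode' : w'' s = -(r:ℂ) ^ 2 * w s - 2 * (b s : ℂ) * w' s := by
      have h0 := hode s (hTtr.trans hs)
      linear_combination h0
    rw [hode']
    push_cast
    ring
  -- the adapted energy G and its derivative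
  obtain ⟨G, hGdef⟩ : ∃ G : ℝ → ℝ,
      G = fun s => ‖v1 s‖ ^ 2 + (r ^ 2 - (b s) ^ 2) * ‖v s‖ ^ 2 := ⟨_, rfl⟩
  obtain ⟨g, hgdef⟩ : ∃ g : ℝ → ℝ,
      g = fun s => 2 * (b' s) * ⟪v s, v1 s⟫ - 2 * (b s) * (b' s) * ‖v s‖ ^ 2 := ⟨_, rfl⟩
  have hGd : ∀ s ∈ Set.Ici tr, HasDerivWithinAt G (g s) (Set.Ici tr) s := by
    intro s hs
    simp only [hGdef, hgdef]
    have hnorm1 : HasDerivWithinAt (fun u => ‖v1 u‖ ^ 2)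
        (⟪v1 s, (((b s) ^ 2 + b' s - r ^ 2 : ℝ) : ℂ) * v s⟫
          + ⟪(((b s) ^ 2 + b' s - r ^ 2 : ℝ) : ℂ) * v s, v1 s⟫) (Set.Ici tr) s := by
      have h := (hv1d s hs).inner ℝ (hv1d s hs)
      have heq : (fun u => (⟪v1 u, v1 u⟫ : ℝ)) = fun u => ‖v1 u‖ ^ 2 :=
        funext fun u => real_inner_self_eq_norm_sq _
      rwa [heq] at h
    have hnormv : HasDerivWithinAt (fun u => ‖v u‖ ^ 2)
        (⟪v s, v1 s⟫ + ⟪v1 s, v s⟫) (Set.Ici tr) s := by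
      have h := (hvd s hs).inner ℝ (hvd s hs)
      have heq : (fun u => (⟪v u, v u⟫ : ℝ)) = fun u => ‖v u‖ ^ 2 :=
        funext fun u => real_inner_self_eq_norm_sq _
      rwa [heq] at h
    have hsq : HasDerivWithinAt (fun u => r ^ 2 - (b u) ^ 2)
        (-(b' s * b s + b s * b' s)) (Set.Ici tr) s := by
      have h := ((hbR s hs).mul (hbR s hs)).const_sub (r ^ 2)
      simpa only [pow_two, Pi.mul_apply] using h
    have h2 := hsq.mul hnormv
    have htot := hnorm1.add h2
    refine htot.congr_deriv ?_
    have hsm : (((b s) ^ 2 + b' s - r ^ 2 : ℝ) : ℂ) * v s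
        = ((b s) ^ 2 + b' s - r ^ 2 : ℝ) • v s := (Complex.real_smul).symm
    rw [hsm, real_inner_smul_right, real_inner_smul_left]
    rw [real_inner_comm (v1 s) (v s)]
    ring

  -- pointwise facts about G
  have hb2r : ∀ s ∈ Set.Ici tr, (b s) ^ 2 ≤ r ^ 2 / 4 := by
    intro s hs
    have h1 := hb_half s hs
    have h2 := abs_nonneg (b s)
    nlinarith [sq_abs (b s)]
  have hGnn : ∀ s ∈ Set.Ici tr, 0 ≤ G s := by
    intro s hs
    have h2 := hb2r s hs
    have eG : G s = ‖v1 s‖ ^ 2 + (r ^ 2 - b s ^ 2) * ‖v s‖ ^ 2 := by rw [hGdef]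
    rw [eG]
    nlinarith [sq_nonneg ‖v1 s‖, sq_nonneg ‖v s‖]
  have hgG : ∀ s ∈ Set.Ici tr, |g s| ≤ (4 * b₂ / r * (1 + s) ^ (-(2 * β))) * G s := by
    intro s hs
    have hs' : tr ≤ s := hs
    have h1s : (0:ℝ) < 1 + s := by linarith
    have eG : G s = ‖v1 s‖ ^ 2 + (r ^ 2 - b s ^ 2) * ‖v s‖ ^ 2 := by rw [hGdef]
    have eg : g s = 2 * b' s * ⟪v s, v1 s⟫ - 2 * b s * b' s * ‖v s‖ ^ 2 := by rw [hgdef]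
    have hInorm : |(⟪v s, v1 s⟫ : ℝ)| ≤ ‖v s‖ * ‖v1 s‖ := abs_real_inner_le_norm _ _
    set X := ‖v s‖ with hX
    set Y := ‖v1 s‖ with hY
    set I : ℝ := ⟪v s, v1 s⟫ with hI
    set q : ℝ := (1 + s) ^ (-(2 * β)) with hq
    have hq0 : 0 ≤ q := Real.rpow_nonneg h1s.le _
    have hb'le : |b' s| ≤ b₂ * q := hb' s (hTtr.trans hs')
    have hXnn : 0 ≤ X := norm_nonneg _
    have hYnn : 0 ≤ Y := norm_nonneg _
    clear_value X Y I q
    have hb2 := hb2r s hs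
    have hGX : 3 / 4 * r ^ 2 * X ^ 2 ≤ G s := by
      rw [eG]; nlinarith [sq_nonneg Y, sq_nonneg X]
    have hGY : Y ^ 2 ≤ G s := by
      rw [eG]; nlinarith [sq_nonneg X]
    have hGs := hGnn s hs
    have habs : |g s| ≤ 2 * |b' s| * |I| + 2 * |b s| * |b' s| * X ^ 2 := by
      rw [eg]
      have e1 := abs_sub (2 * (b' s) * I) (2 * (b s) * (b' s) * X ^ 2)
      have e2 : |2 * (b' s) * I| = 2 * |b' s| * |I| := by
        rw [abs_mul, abs_mul, abs_two]
      have e3 : |2 * (b s) * (b' s) * X ^ 2| = 2 * |b s| * |b' s| * X ^ 2 := by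
        rw [abs_mul, abs_mul, abs_mul, abs_two, abs_of_nonneg (sq_nonneg X)]
      rw [e2, e3] at e1
      exact e1
    rw [show (4 * b₂ / r * q) * G s = (4 * b₂ * q * G s) / r by ring, le_div_iff₀ hr]
    calc |g s| * r ≤ (2 * |b' s| * |I| + 2 * |b s| * |b' s| * X ^ 2) * r :=
          mul_le_mul_of_nonneg_right habs hr.le
      _ ≤ 4 * b₂ * q * G s :=
          gbound_aux hr hq0 hGs hXnn hYnn hInorm (abs_nonneg _) (abs_nonneg _)
            (hb_half s hs) hb'le hb₂ hGX hGY
  -- the integrating factor H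
  obtain ⟨H, hHdef⟩ : ∃ H : ℝ → ℝ, H = fun s =>
      (4 * b₂ / (r * (2 * β - 1))) * ((1 + tr) ^ (1 - 2 * β) - (1 + s) ^ (1 - 2 * β)) := ⟨_, rfl⟩
  have hHd : ∀ s ∈ Set.Ici tr,
      HasDerivWithinAt H (4 * b₂ / r * (1 + s) ^ (-(2 * β))) (Set.Ici tr) s := by
    intro s hs
    have hs' : tr ≤ s := hs
    have h1s : (0:ℝ) < 1 + s := by linarith
    rw [hHdef]
    have hone : HasDerivWithinAt (fun u : ℝ => 1 + u) 1 (Set.Ici tr) s := by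
      simpa using (hasDerivWithinAt_id s (Set.Ici tr)).const_add (1:ℝ)
    have hp := hone.rpow_const (p := 1 - 2 * β) (Or.inl h1s.ne')
    have h2 := (hp.const_sub ((1 + tr) ^ (1 - 2 * β))).const_mul (4 * b₂ / (r * (2 * β - 1)))
    refine h2.congr_deriv ?_
    rw [show (1 - 2 * β - 1) = -(2 * β) by ring]
    field_simp
    ring
  have hH0 : H tr = 0 := by rw [hHdef]; simp
  have hcoef : (0:ℝ) < 4 * b₂ / (r * (2 * β - 1)) := by positivity
  have h3 : (1 + tr) ^ (1 - 2 * β) * (2 * b₁) ≤ r := by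
    have e3 : (1 + tr) ^ (1 - 2 * β + α) ≤ 1 :=
      Real.rpow_le_one_of_one_le_of_nonpos (by linarith) (by linarith)
    calc (1 + tr) ^ (1 - 2 * β) * (2 * b₁)
        ≤ (1 + tr) ^ (1 - 2 * β) * ((1 + tr) ^ α * r) :=
          mul_le_mul_of_nonneg_left hzone (Real.rpow_nonneg h1tr.le _)
      _ = (1 + tr) ^ (1 - 2 * β + α) * r := by
          rw [← mul_assoc, ← Real.rpow_add h1tr]
      _ ≤ 1 * r := mul_le_mul_of_nonneg_right e3 hr.le
      _ = r := one_mul r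
  have hHM : ∀ s ∈ Set.Ici tr, H s ≤ M ∧ 0 ≤ H s := by
    intro s hs
    have hs' : tr ≤ s := hs
    have h1s : (0:ℝ) < 1 + s := by linarith
    have hA0 : 0 ≤ (1 + tr) ^ (1 - 2 * β) := Real.rpow_nonneg h1tr.le _
    have hB0 : 0 ≤ (1 + s) ^ (1 - 2 * β) := Real.rpow_nonneg h1s.le _
    have hmon : (1 + s) ^ (1 - 2 * β) ≤ (1 + tr) ^ (1 - 2 * β) :=
      Real.rpow_le_rpow_of_nonpos h1tr (by linarith) (by linarith)
    constructor
    · rw [hHdef]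
      have h2 : (4 * b₂ / (r * (2 * β - 1))) * ((1 + tr) ^ (1 - 2 * β) - (1 + s) ^ (1 - 2 * β))
          ≤ (4 * b₂ / (r * (2 * β - 1))) * (1 + tr) ^ (1 - 2 * β) :=
        mul_le_mul_of_nonneg_left (by linarith) hcoef.le
      have h4 : (4 * b₂ / (r * (2 * β - 1))) * (1 + tr) ^ (1 - 2 * β) ≤ M := by
        rw [hM, div_mul_eq_mul_div, div_le_div_iff₀ (by positivity) (by positivity)]
        nlinarith [mul_le_mul_of_nonneg_left h3 (by positivity : (0:ℝ) ≤ 2 * b₂ * (2 * β - 1))]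
      exact le_trans h2 h4
    · rw [hHdef]
      exact mul_nonneg hcoef.le (by linarith)
  -- Gronwall
  have hgron := gronwall_aux' (h := fun s => 4 * b₂ / r * (1 + s) ^ (-(2 * β))) hGd hHd hgG
  have hexpM : Real.exp (H t - H tr) ≤ Real.exp M := by
    rw [hH0, sub_zero]
    exact Real.exp_le_exp.2 (hHM t htt).1
  have hGt_le : G t ≤ G tr * Real.exp M := by
    have h1 := (hgron t htt).1
    have h2 := mul_le_mul_of_nonneg_left hexpM (hGnn tr Set.self_mem_Ici)
    linarith
  have hGtr_le : G tr ≤ G t * Real.exp M := by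
    have h1 := (hgron t htt).2
    have h2 := mul_le_mul_of_nonneg_left hexpM (hGnn t htt)
    linarith
  -- comparison between G and the energy E
  have hcomp : ∀ s ∈ Set.Ici tr,
      ‖w' s‖ ^ 2 + r ^ 2 * ‖w s‖ ^ 2 ≤ 2 * Real.exp (2 * b₀) * G s ∧
      G s ≤ 2 * Real.exp (2 * b₀) * (‖w' s‖ ^ 2 + r ^ 2 * ‖w s‖ ^ 2) := by
    intro s hs
    have hBs := abs_le.1 (hBb s hs)
    have hnc : ‖c s‖ = Real.exp (B s) := by
      simp only [hcdef]
      rw [Complex.norm_exp]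
      simp
    have hnv : ‖v s‖ = Real.exp (B s) * ‖w s‖ := by
      simp only [hvdef]; rw [norm_mul, hnc]
    have hnv1 : ‖v1 s‖ = Real.exp (B s) * ‖w' s + (b s : ℂ) * w s‖ := by
      simp only [hv1def]; rw [norm_mul, hnc]
    have hbY : ‖(b s : ℂ) * w s‖ = |b s| * ‖w s‖ := by
      rw [norm_mul, Complex.norm_real, Real.norm_eq_abs]
    have ht1 : ‖w' s + (b s : ℂ) * w s‖ ≤ ‖w' s‖ + |b s| * ‖w s‖ := by
      calc ‖w' s + (b s : ℂ) * w s‖ ≤ ‖w' s‖ + ‖(b s : ℂ) * w s‖ := norm_add_le _ _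
        _ = ‖w' s‖ + |b s| * ‖w s‖ := by rw [hbY]
    have ht2 : ‖w' s‖ ≤ ‖w' s + (b s : ℂ) * w s‖ + |b s| * ‖w s‖ := by
      have e1 : w' s = (w' s + (b s : ℂ) * w s) - (b s : ℂ) * w s := by ring
      calc ‖w' s‖ = ‖(w' s + (b s : ℂ) * w s) - (b s : ℂ) * w s‖ := by rw [← e1]
        _ ≤ ‖w' s + (b s : ℂ) * w s‖ + ‖(b s : ℂ) * w s‖ := norm_sub_le _ _
        _ = ‖w' s + (b s : ℂ) * w s‖ + |b s| * ‖w s‖ := by rw [hbY]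
    set X := ‖w' s‖ with hXd
    set Y := ‖w s‖ with hYd
    set Z := ‖w' s + (b s : ℂ) * w s‖ with hZd
    have hXnn : 0 ≤ X := norm_nonneg _
    have hYnn : 0 ≤ Y := norm_nonneg _
    have hZnn : 0 ≤ Z := norm_nonneg _
    have hb2 := hb2r s hs
    have habs0 := abs_nonneg (b s)
    have eG : G s = Real.exp (2 * B s) * (Z ^ 2 + (r ^ 2 - b s ^ 2) * Y ^ 2) := by
      simp only [hGdef]
      rw [hnv1, hnv,
        show Real.exp (2 * B s) = Real.exp (B s) * Real.exp (B s) by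
          rw [← Real.exp_add]; ring_nf]
      ring
    clear_value X Y Z
    have hcmp := energy_compare_aux (r := r) hXnn hYnn hZnn (abs_nonneg (b s))
      (by rw [sq_abs]; exact hb2) ht1 ht2
    rw [sq_abs] at hcmp
    obtain ⟨hE2P, hP2E, hP0⟩ := hcmp
    have h1e : (1:ℝ) ≤ Real.exp (2 * b₀ + 2 * B s) := by
      rw [← Real.exp_zero]
      exact Real.exp_le_exp.2 (by linarith [hBs.1])
    have hPG : Z ^ 2 + (r ^ 2 - b s ^ 2) * Y ^ 2 ≤ Real.exp (2 * b₀) * G s := by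
      have h5 := le_mul_of_one_le_left hP0 h1e
      calc Z ^ 2 + (r ^ 2 - b s ^ 2) * Y ^ 2
          ≤ Real.exp (2 * b₀ + 2 * B s) * (Z ^ 2 + (r ^ 2 - b s ^ 2) * Y ^ 2) := h5
        _ = Real.exp (2 * b₀) * (Real.exp (2 * B s) * (Z ^ 2 + (r ^ 2 - b s ^ 2) * Y ^ 2)) := by
            rw [Real.exp_add]; ring
        _ = Real.exp (2 * b₀) * G s := by rw [← eG]
    constructor
    · have := mul_le_mul_of_nonneg_left hPG (by norm_num : (0:ℝ) ≤ 2)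
      linarith
    · have hexpB : Real.exp (2 * B s) ≤ Real.exp (2 * b₀) := Real.exp_le_exp.2 (by linarith [hBs.2])
      calc G s = Real.exp (2 * B s) * (Z ^ 2 + (r ^ 2 - b s ^ 2) * Y ^ 2) := eG
        _ ≤ Real.exp (2 * b₀) * (Z ^ 2 + (r ^ 2 - b s ^ 2) * Y ^ 2) :=
            mul_le_mul_of_nonneg_right hexpB hP0
        _ ≤ Real.exp (2 * b₀) * (2 * (X ^ 2 + r ^ 2 * Y ^ 2)) :=
            mul_le_mul_of_nonneg_left hP2E (Real.exp_pos _).le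
        _ = 2 * Real.exp (2 * b₀) * (X ^ 2 + r ^ 2 * Y ^ 2) := by ring
  -- assemble
  obtain ⟨hE1, hG1⟩ := hcomp t htt
  obtain ⟨hE2, hG2⟩ := hcomp tr Set.self_mem_Ici
  have hEt0 : 0 ≤ ‖w' t‖ ^ 2 + r ^ 2 * ‖w t‖ ^ 2 := by positivity
  have hEtr0 : 0 ≤ ‖w' tr‖ ^ 2 + r ^ 2 * ‖w tr‖ ^ 2 := by positivity
  have hA0 : (0:ℝ) < Real.exp (2 * b₀) := Real.exp_pos _
  have hM1 : (1:ℝ) ≤ Real.exp M := by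
    rw [← Real.exp_zero]; exact Real.exp_le_exp.2 hM0.le
  have hCsq : C ^ 2 = 4 * (Real.exp (2 * b₀)) ^ 2 * (Real.exp M) ^ 2 := by
    rw [hC, Real.exp_add]; ring
  have key1 : ‖w' t‖ ^ 2 + r ^ 2 * ‖w t‖ ^ 2 ≤ C ^ 2 * (‖w' tr‖ ^ 2 + r ^ 2 * ‖w tr‖ ^ 2) := by
    have s1 : G t ≤ (2 * Real.exp (2 * b₀) * (‖w' tr‖ ^ 2 + r ^ 2 * ‖w tr‖ ^ 2)) * Real.exp M := by
      have := mul_le_mul_of_nonneg_right hG2 (Real.exp_pos M).le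
      linarith
    have s2 := mul_le_mul_of_nonneg_left s1 (by positivity : (0:ℝ) ≤ 2 * Real.exp (2 * b₀))
    have s3 := le_trans hE1 s2
    have s5 : (0:ℝ) ≤ 4 * (Real.exp (2 * b₀)) ^ 2 * (‖w' tr‖ ^ 2 + r ^ 2 * ‖w tr‖ ^ 2)
        * (Real.exp M * (Real.exp M - 1)) :=
      mul_nonneg (by positivity) (mul_nonneg (Real.exp_pos M).le (by linarith))
    rw [hCsq]
    nlinarith [s3, s5]
  have key2 : ‖w' tr‖ ^ 2 + r ^ 2 * ‖w tr‖ ^ 2 ≤ C ^ 2 * (‖w' t‖ ^ 2 + r ^ 2 * ‖w t‖ ^ 2) := by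
    have s1 : G tr ≤ (2 * Real.exp (2 * b₀) * (‖w' t‖ ^ 2 + r ^ 2 * ‖w t‖ ^ 2)) * Real.exp M := by
      have := mul_le_mul_of_nonneg_right hG1 (Real.exp_pos M).le
      linarith
    have s2 := mul_le_mul_of_nonneg_left s1 (by positivity : (0:ℝ) ≤ 2 * Real.exp (2 * b₀))
    have s3 := le_trans hE2 s2
    have s5 : (0:ℝ) ≤ 4 * (Real.exp (2 * b₀)) ^ 2 * (‖w' t‖ ^ 2 + r ^ 2 * ‖w t‖ ^ 2)
        * (Real.exp M * (Real.exp M - 1)) :=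
      mul_nonneg (by positivity) (mul_nonneg (Real.exp_pos M).le (by linarith))
    rw [hCsq]
    nlinarith [s3, s5]
  constructor
  · have h := Real.sqrt_le_sqrt key2
    rw [Real.sqrt_mul (sq_nonneg C), Real.sqrt_sq hC0.le] at h
    calc C⁻¹ * Real.sqrt (‖w' tr‖ ^ 2 + r ^ 2 * ‖w tr‖ ^ 2)
        ≤ C⁻¹ * (C * Real.sqrt (‖w' t‖ ^ 2 + r ^ 2 * ‖w t‖ ^ 2)) :=
          mul_le_mul_of_nonneg_left h (inv_nonneg.2 hC0.le)
      _ = Real.sqrt (‖w' t‖ ^ 2 + r ^ 2 * ‖w t‖ ^ 2) := by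
          field_simp
  · have h := Real.sqrt_le_sqrt key1
    rw [Real.sqrt_mul (sq_nonneg C), Real.sqrt_sq hC0.le] at h
    exact h
end

section
/- Let T ≥ 0, let α < 0 and β with 2β ≥ α + 1, and let b : [T,∞) → ℝ be continuously differentiable. Suppose there are constants b₀, b₁, b₂ > 0 such that for all T ≤ s ≤ t: |∫_s^t b(σ) dσ| ≤ b₀, |b(t)| ≤ b₁(1+t)^{−α}, and |b'(t)| ≤ b₂(1+t)^{−2β}. Then there exist constants N ≥ 2b₁ and K₁ > 0 such that for every r > 0 and every twice continuously differentiable solution w : [T,∞) → ℂ of w''(t) + r² w(t) + 2b(t) w'(t) = 0, setting t_r := max{T, (N r^{−1})^{1/α} − 1} and |W(t)|² := |w'(t)|² + r²|w(t)|², one has K₁^{−1} |W(T)| ≤ |W(t)| ≤ K₁ |W(T)| for all t with T ≤ t ≤ t_r, with K₁ independent of r and of w. -/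
open MeasureTheory Filter Topology Set

lemma inner_coord (z w : ℂ) : (inner ℝ z w : ℝ) = z.re * w.re + z.im * w.im := by
  simp [real_inner_eq_re_inner ℂ, RCLike.inner_apply, Complex.mul_re]
  ring

lemma norm_coord (z : ℂ) : ‖z‖^2 = z.re^2 + z.im^2 := by
  rw [Complex.sq_norm]; simp [Complex.normSq_apply]; ring

lemma deriv_ident (r c c' : ℝ) (W W' W'' : ℂ)
    (hode : W'' + (r:ℂ)^2 * W + 2*(c:ℂ)*W' = 0) :
    2 * (inner ℝ (W' + c*W) (W'' + c'*W + c*W') : ℝ)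
      + ((0 - 2*c^1*c') * ‖W‖^2 + (r^2 - c^2) * (2 * (inner ℝ W W' : ℝ)))
    = -(2*c) * (‖W' + c*W‖^2 + (r^2-c^2) * ‖W‖^2)
      + (2*c' * (inner ℝ (W' + c*W) W : ℝ) - 2*c*c' * ‖W‖^2) := by
  have h2 : W'' = -((r:ℂ)^2*W) - 2*c*W' := by linear_combination hode
  subst h2
  simp only [inner_coord, norm_coord, Complex.add_re, Complex.add_im, Complex.mul_re,
    Complex.mul_im, Complex.sub_re, Complex.sub_im, Complex.neg_re, Complex.neg_im,
    Complex.ofReal_re, Complex.ofReal_im, ← Complex.ofReal_pow]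
  norm_num
  ring

lemma err_bound (r c c' : ℝ) (hr : 0 < r) (hc : c^2 ≤ r^2/4) (Z W : ℂ) :
    |2*c' * (inner ℝ Z W : ℝ) - 2*c*c' * ‖W‖^2|
      ≤ 4/r * |c'| * (‖Z‖^2 + (r^2 - c^2)*‖W‖^2) := by
  have hP : |(inner ℝ Z W : ℝ)| ≤ ‖Z‖ * ‖W‖ := abs_real_inner_le_norm Z W
  have habs : |c| ≤ r/2 := by
    rw [abs_le]; constructor <;> nlinarith [sq_nonneg (c - r/2), sq_nonneg (c + r/2)]
  have h1 : |2*c' * (inner ℝ Z W : ℝ) - 2*c*c' * ‖W‖^2|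
      ≤ 2 * |c'| * (‖Z‖ * ‖W‖) + 2 * (|c| * |c'|) * ‖W‖^2 := by
    refine (abs_sub _ _).trans ?_
    rw [abs_mul, abs_mul, abs_mul, abs_mul, abs_mul]
    have h0 : |(2:ℝ)| = 2 := by norm_num
    have h2 : |‖W‖^2| = ‖W‖^2 := abs_of_nonneg (by positivity)
    rw [h0, h2]
    nlinarith [abs_nonneg c', abs_nonneg c, norm_nonneg W, hP,
      abs_nonneg ((inner ℝ Z W : ℝ)),
      mul_le_mul_of_nonneg_left hP (abs_nonneg c')]
  refine h1.trans ?_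
  have hZ := norm_nonneg Z
  have hW := norm_nonneg W
  have hc' := abs_nonneg c'
  rw [div_mul_eq_mul_div, div_mul_eq_mul_div, le_div_iff₀ hr]
  nlinarith [mul_nonneg hc' (sq_nonneg (‖Z‖ - r*‖W‖)), mul_nonneg (mul_nonneg hc' hW) hW,
    mul_nonneg hc' (mul_nonneg hW hW), sq_nonneg ‖W‖,
    mul_nonneg (mul_nonneg hc' hW) (mul_nonneg hW hr.le)]

lemma comp_lower (r c : ℝ) (hc : c^2 ≤ r^2/4) (W' W : ℂ) :
    ‖W'‖^2 + r^2*‖W‖^2 ≤ 2*(‖W' + c*W‖^2 + (r^2 - c^2)*‖W‖^2) := by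
  simp only [norm_coord, Complex.add_re, Complex.add_im, Complex.mul_re, Complex.mul_im,
    Complex.ofReal_re, Complex.ofReal_im]
  nlinarith [sq_nonneg (W'.re + 2*c*W.re), sq_nonneg (W'.im + 2*c*W.im),
    sq_nonneg W.re, sq_nonneg W.im]

lemma comp_upper (r c : ℝ) (hc : c^2 ≤ r^2/4) (W' W : ℂ) :
    ‖W' + c*W‖^2 + (r^2 - c^2)*‖W‖^2 ≤ 2*(‖W'‖^2 + r^2*‖W‖^2) := by
  simp only [norm_coord, Complex.add_re, Complex.add_im, Complex.mul_re, Complex.mul_im,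
    Complex.ofReal_re, Complex.ofReal_im]
  nlinarith [sq_nonneg (W'.re - c*W.re), sq_nonneg (W'.im - c*W.im),
    sq_nonneg W.re, sq_nonneg W.im]

lemma mono_aux {a c : ℝ} (hac : a ≤ c) {U G : ℝ → ℝ}
    (hU : ContinuousOn U (Icc a c)) (hd : ∀ x ∈ Ioo a c, HasDerivAt U (G x) x)
    (hG : ∀ x ∈ Ioo a c, G x ≤ 0) : U c ≤ U a := by
  have h := antitoneOn_of_deriv_nonpos (convex_Icc a c) hU
    (fun x hx => by
      rw [interior_Icc] at hx
      exact (hd x hx).differentiableAt.differentiableWithinAt)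
    (fun x hx => by
      rw [interior_Icc] at hx
      rw [(hd x hx).deriv]
      exact hG x hx)
  exact h (left_mem_Icc.2 hac) (right_mem_Icc.2 hac) hac

lemma mono_aux' {a c : ℝ} (hac : a ≤ c) {U G : ℝ → ℝ}
    (hU : ContinuousOn U (Icc a c)) (hd : ∀ x ∈ Ioo a c, HasDerivAt U (G x) x)
    (hG : ∀ x ∈ Ioo a c, 0 ≤ G x) : U a ≤ U c := by
  have h := mono_aux hac (U := fun x => -U x) (G := fun x => -G x) hU.neg
    (fun x hx => (hd x hx).neg) (fun x hx => neg_nonpos.2 (hG x hx))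
  simp only [neg_le_neg_iff] at h
  exact h

set_option maxHeartbeats 2000000 in
/-- Proposition 3.4 (estimate in the hyperbolic zone `Z_H`), case `α < 0`:
for `T ≤ t ≤ t_r = max{T, (N r⁻¹)^(1/α) - 1}`, the energy
`|W(t)| = √(|w'(t)|² + r²|w(t)|²)` of a solution of `w'' + r²w + 2bw' = 0`
is comparable to `|W(T)|`, uniformly in `r` and `w`. -/
theorem zone_ZH_estimate_neg
    (T : ℝ) (hT : 0 ≤ T)
    (α β : ℝ) (hα0 : α < 0) (hβ : α + 1 ≤ 2 * β)
    (b b' : ℝ → ℝ)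
    (hbd : ∀ t ∈ Set.Ici T, HasDerivWithinAt b (b' t) (Set.Ici T) t)
    (hb'c : ContinuousOn b' (Set.Ici T))
    (b₀ b₁ b₂ : ℝ) (hb₀ : 0 < b₀) (hb₁ : 0 < b₁) (hb₂ : 0 < b₂)
    (hib : ∀ s t : ℝ, T ≤ s → s ≤ t → |∫ σ in s..t, b σ| ≤ b₀)
    (hb : ∀ t ≥ T, |b t| ≤ b₁ * (1 + t) ^ (-α))
    (hb' : ∀ t ≥ T, |b' t| ≤ b₂ * (1 + t) ^ (-(2 * β))) :
    ∃ N : ℝ, 2 * b₁ ≤ N ∧ ∃ K₁ > (0:ℝ), ∀ r : ℝ, 0 < r →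
      ∀ w w' w'' : ℝ → ℂ,
        (∀ t ∈ Set.Ici T, HasDerivWithinAt w (w' t) (Set.Ici T) t) →
        (∀ t ∈ Set.Ici T, HasDerivWithinAt w' (w'' t) (Set.Ici T) t) →
        ContinuousOn w'' (Set.Ici T) →
        (∀ t ≥ T, w'' t + (r : ℂ) ^ 2 * w t + 2 * (b t : ℂ) * w' t = 0) →
        ∀ tr : ℝ, tr = max T ((N * r⁻¹) ^ (1 / α) - 1) →
          ∀ t : ℝ, T ≤ t → t ≤ tr →
            K₁⁻¹ * Real.sqrt (‖w' T‖ ^ 2 + r ^ 2 * ‖w T‖ ^ 2)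
              ≤ Real.sqrt (‖w' t‖ ^ 2 + r ^ 2 * ‖w t‖ ^ 2) ∧
            Real.sqrt (‖w' t‖ ^ 2 + r ^ 2 * ‖w t‖ ^ 2)
              ≤ K₁ * Real.sqrt (‖w' T‖ ^ 2 + r ^ 2 * ‖w T‖ ^ 2) := by
  set N : ℝ := 2 * b₁ with hN
  have hNpos : 0 < N := by positivity
  set M : ℝ := 2 * b₀ + 4 * b₂ / (-α * N) with hM
  have hα : 0 < -α := neg_pos.2 hα0
  have hMpos : 0 < M := by
    have h4 : 0 < 4 * b₂ / (-α * N) := div_pos (by positivity) (mul_pos hα hNpos)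
    rw [hM]; linarith
  set K₁ : ℝ := 2 * Real.exp M with hK₁
  have hK₁pos : 0 < K₁ := by positivity
  have hK₁one : 1 ≤ K₁ := by
    have := Real.one_le_exp hMpos.le
    nlinarith
  refine ⟨N, le_rfl, K₁, hK₁pos, ?_⟩
  intro r hr w w' w'' hw hw' hw''c hode tr htr t hTt httr
  -- rewrite goal in terms of norms
  set E : ℝ → ℝ := fun τ => ‖w' τ‖^2 + r^2 * ‖w τ‖^2 with hE
  have hEnn : ∀ τ, 0 ≤ E τ := fun τ => by positivity
  rcases eq_or_lt_of_le hTt with rfl | hTt'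
  · constructor
    · have h1 : K₁⁻¹ ≤ 1 := inv_le_one_of_one_le₀ hK₁one
      nlinarith [Real.sqrt_nonneg (E T)]
    · nlinarith [Real.sqrt_nonneg (E T)]
  -- main case T < t
  have hX : T < (N * r⁻¹) ^ (1 / α) - 1 := by
    by_contra h
    push_neg at h
    rw [htr, max_eq_left h] at httr
    exact absurd httr (not_le.2 hTt')
  have htr' : tr = (N * r⁻¹) ^ (1 / α) - 1 := by rw [htr, max_eq_right hX.le]
  have hNr : 0 < N * r⁻¹ := by positivity
  -- the zone estimate
  have hzone1 : ∀ s, T ≤ s → s ≤ t → (1 + s) ^ (-α) ≤ r / N := by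
    intro s hs hst
    have h1s : (0:ℝ) < 1 + s := by linarith
    have h1 : 1 + s ≤ (N * r⁻¹) ^ (1 / α) := by
      have := httr.trans_eq htr'
      linarith [hst]
    have h2 : (1 + s) ^ (-α) ≤ ((N * r⁻¹) ^ (1 / α)) ^ (-α) :=
      Real.rpow_le_rpow h1s.le h1 (by linarith)
    have h3 : ((N * r⁻¹) ^ (1 / α)) ^ (-α) = r / N := by
      rw [← Real.rpow_mul hNr.le]
      have he : 1 / α * (-α) = -1 := by field_simp [hα0.ne]
      rw [he, Real.rpow_neg_one, mul_inv, inv_inv]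
      ring
    exact h2.trans_eq h3
  have zone : ∀ s, T ≤ s → s ≤ t → (b s)^2 ≤ r^2/4 := by
    intro s hs hst
    have h4 : |b s| ≤ b₁ * (r / N) := by
      refine (hb s hs).trans ?_
      have := hzone1 s hs hst
      nlinarith [Real.rpow_nonneg (by linarith : (0:ℝ) ≤ 1 + s) (-α)]
    have h5 : b₁ * (r / N) = r / 2 := by
      rw [hN]; field_simp
    rw [h5] at h4
    have := abs_nonneg (b s)
    have hsq : (b s)^2 = |b s|^2 := (sq_abs _).symm
    rw [hsq]
    nlinarith
  -- continuity basics
  have hbc : ContinuousOn b (Set.Ici T) := fun x hx => (hbd x hx).continuousWithinAt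
  -- the auxiliary functions
  set z : ℝ → ℂ := fun τ => w' τ + (b τ : ℂ) * w τ with hz
  set Q : ℝ → ℝ := fun τ => ‖z τ‖^2 + (r^2 - (b τ)^2) * ‖w τ‖^2 with hQ
  set Qd : ℝ → ℝ := fun τ =>
    2 * (inner ℝ (z τ) (w'' τ + (b' τ : ℂ) * w τ + (b τ : ℂ) * w' τ) : ℝ)
      + ((0 - 2 * (b τ)^1 * b' τ) * ‖w τ‖^2
        + (r^2 - (b τ)^2) * (2 * (inner ℝ (w τ) (w' τ) : ℝ))) with hQd
  -- derivative of Q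
  have hbC : ∀ x ∈ Set.Ici T,
      HasDerivWithinAt (fun τ => ((b τ : ℝ) : ℂ)) ((b' x : ℂ)) (Set.Ici T) x := by
    intro x hx
    exact Complex.ofRealCLM.hasFDerivAt.comp_hasDerivWithinAt x (hbd x hx)
  have hzd : ∀ x ∈ Set.Ici T,
      HasDerivWithinAt z (w'' x + (b' x : ℂ) * w x + (b x : ℂ) * w' x) (Set.Ici T) x := by
    intro x hx
    have h := (hw' x hx).add ((hbC x hx).mul (hw x hx))
    have e : w'' x + (b' x : ℂ) * w x + (b x : ℂ) * w' x
        = w'' x + ((b' x : ℂ) * w x + (b x : ℂ) * w' x) := by ring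
    rw [hz, e]
    exact h
  have hQdd : ∀ x ∈ Set.Ici T, HasDerivWithinAt Q (Qd x) (Set.Ici T) x := by
    intro x hx
    have h1 := (hzd x hx).norm_sq
    have h2 := ((hasDerivWithinAt_const x (Set.Ici T) (r^2)).sub ((hbd x hx).pow 2)).mul
      ((hw x hx).norm_sq)
    have h := h1.add h2
    rw [hQ, hQd]
    exact h.congr_deriv (by simp)
  have hQcont : ContinuousOn Q (Set.Ici T) := fun x hx => (hQdd x hx).continuousWithinAt
  -- the key identity
  have hident : ∀ x, T ≤ x → Qd x = -(2 * b x) * Q x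
      + (2 * b' x * (inner ℝ (z x) (w x) : ℝ) - 2 * b x * b' x * ‖w x‖^2) := by
    intro x hx
    have h := deriv_ident r (b x) (b' x) (w x) (w' x) (w'' x) (hode x hx)
    simp only [hQd, hQ, hz]
    linear_combination h
  have hQnn : ∀ x, T ≤ x → x ≤ t → 0 ≤ Q x := by
    intro x hx hxt
    have h1 : 0 ≤ r^2 - (b x)^2 := by nlinarith [zone x hx hxt]
    simp only [hQ]
    have := norm_nonneg (z x)
    have := norm_nonneg (w x)
    positivity
  have herr : ∀ x, T ≤ x → x ≤ t →
      |Qd x + 2 * b x * Q x| ≤ 4 / r * |b' x| * Q x := by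
    intro x hx hxt
    have e : Qd x + 2 * b x * Q x
        = 2 * b' x * (inner ℝ (z x) (w x) : ℝ) - 2 * b x * b' x * ‖w x‖^2 := by
      rw [hident x hx]; ring
    rw [e]
    have h := err_bound r (b x) (b' x) hr (zone x hx hxt) (z x) (w x)
    simpa only [hQ] using h
  -- the exponent functions
  set gP : ℝ → ℝ := fun s => (-2) * b s + (4 / r) * |b' s| with hgP
  set gM : ℝ → ℝ := fun s => (-2) * b s - (4 / r) * |b' s| with hgM
  have hgPc : ContinuousOn gP (Set.Ici T) :=
    (continuousOn_const.mul hbc).add (continuousOn_const.mul hb'c.abs)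
  have hgMc : ContinuousOn gM (Set.Ici T) :=
    (continuousOn_const.mul hbc).sub (continuousOn_const.mul hb'c.abs)
  set φP : ℝ → ℝ := fun x => ∫ s in T..x, gP s with hφP
  set φM : ℝ → ℝ := fun x => ∫ s in T..x, gM s with hφM
  have hFTC : ∀ (g : ℝ → ℝ), ContinuousOn g (Set.Ici T) → ∀ x ∈ Set.Ioo T t,
      HasDerivAt (fun y => ∫ s in T..y, g s) (g x) x := by
    intro g hgc x hx
    have hcont : ContinuousAt g x := (hgc x (le_of_lt hx.1)).continuousAt (Ici_mem_nhds hx.1)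
    have hmeas : StronglyMeasurableAtFilter g (nhds x) :=
      ⟨Set.Ici T, Ici_mem_nhds hx.1, hgc.aestronglyMeasurable measurableSet_Ici⟩
    have hint : IntervalIntegrable g volume T x := by
      apply ContinuousOn.intervalIntegrable
      rw [uIcc_of_le hx.1.le]
      exact hgc.mono Set.Icc_subset_Ici_self
    exact intervalIntegral.integral_hasDerivAt_right hint hmeas hcont
  have hPrim : ∀ (g : ℝ → ℝ), ContinuousOn g (Set.Ici T) →
      ContinuousOn (fun y => ∫ s in T..y, g s) (Set.Icc T t) := by
    intro g hgc
    have h1 : IntegrableOn g (Set.Icc T t) volume :=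
      (hgc.mono Icc_subset_Ici_self).integrableOn_compact isCompact_Icc
    have h2 := intervalIntegral.continuousOn_primitive (f := g) (a := T) (b := t) h1
    refine ContinuousOn.congr h2 ?_
    intro x hx
    exact intervalIntegral.integral_of_le hx.1
  -- Gronwall, upper bound
  have hQT : 0 ≤ Q T := hQnn T le_rfl hTt
  have hQt : 0 ≤ Q t := hQnn t hTt le_rfl
  have hgron : ∀ (g : ℝ → ℝ), ContinuousOn g (Set.Ici T) →
      (∀ x ∈ Set.Ioo T t, Qd x ≤ g x * Q x) →
      Q t ≤ Q T * Real.exp (∫ s in T..t, g s) := by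
    intro g hgc hineq
    set φ : ℝ → ℝ := fun x => ∫ s in T..x, g s with hφ
    set U : ℝ → ℝ := fun x => Q x * Real.exp (-φ x) with hU
    have hUc : ContinuousOn U (Set.Icc T t) :=
      (hQcont.mono Icc_subset_Ici_self).mul
        (Real.continuous_exp.comp_continuousOn (hPrim g hgc).neg)
    have hUd : ∀ x ∈ Set.Ioo T t,
        HasDerivAt U ((Qd x - g x * Q x) * Real.exp (-φ x)) x := by
      intro x hx
      have hQx : HasDerivAt Q (Qd x) x :=
        (hQdd x hx.1.le).hasDerivAt (Ici_mem_nhds hx.1)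
      have h2 : HasDerivAt (fun y => Real.exp (-φ y)) (Real.exp (-φ x) * (-(g x))) x :=
        ((hFTC g hgc x hx).neg).exp
      have h := hQx.mul h2
      exact h.congr_deriv (by ring)
    have hUle : ∀ x ∈ Set.Ioo T t, (Qd x - g x * Q x) * Real.exp (-φ x) ≤ 0 := by
      intro x hx
      have h3 : Qd x ≤ g x * Q x := hineq x hx
      have h4 := Real.exp_pos (-φ x)
      nlinarith
    have hmono := mono_aux hTt'.le hUc hUd hUle
    have hUT : U T = Q T := by
      simp [hU, hφ, intervalIntegral.integral_same]
    rw [hUT] at hmono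
    have h5 : U t = Q t * Real.exp (-φ t) := rfl
    rw [h5] at hmono
    have h6 := Real.exp_pos (φ t)
    calc Q t = Q t * Real.exp (-φ t) * Real.exp (φ t) := by
          rw [mul_assoc, ← Real.exp_add]; simp
      _ ≤ Q T * Real.exp (φ t) := mul_le_mul_of_nonneg_right hmono h6.le
  have hgron' : ∀ (g : ℝ → ℝ), ContinuousOn g (Set.Ici T) →
      (∀ x ∈ Set.Ioo T t, g x * Q x ≤ Qd x) →
      Q T * Real.exp (∫ s in T..t, g s) ≤ Q t := by
    intro g hgc hineq
    set φ : ℝ → ℝ := fun x => ∫ s in T..x, g s with hφ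
    set U : ℝ → ℝ := fun x => Q x * Real.exp (-φ x) with hU
    have hUc : ContinuousOn U (Set.Icc T t) :=
      (hQcont.mono Icc_subset_Ici_self).mul
        (Real.continuous_exp.comp_continuousOn (hPrim g hgc).neg)
    have hUd : ∀ x ∈ Set.Ioo T t,
        HasDerivAt U ((Qd x - g x * Q x) * Real.exp (-φ x)) x := by
      intro x hx
      have hQx : HasDerivAt Q (Qd x) x :=
        (hQdd x hx.1.le).hasDerivAt (Ici_mem_nhds hx.1)
      have h2 : HasDerivAt (fun y => Real.exp (-φ y)) (Real.exp (-φ x) * (-(g x))) x :=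
        ((hFTC g hgc x hx).neg).exp
      have h := hQx.mul h2
      exact h.congr_deriv (by ring)
    have hUge : ∀ x ∈ Set.Ioo T t, 0 ≤ (Qd x - g x * Q x) * Real.exp (-φ x) := by
      intro x hx
      have h3 := hineq x hx
      have h4 := Real.exp_pos (-φ x)
      nlinarith
    have hmono := mono_aux' hTt'.le hUc hUd hUge
    have hUT : U T = Q T := by
      simp [hU, hφ, intervalIntegral.integral_same]
    rw [hUT] at hmono
    have h5 : U t = Q t * Real.exp (-φ t) := rfl
    rw [h5] at hmono
    calc Q T * Real.exp (φ t)
        ≤ (Q t * Real.exp (-φ t)) * Real.exp (φ t) :=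
          mul_le_mul_of_nonneg_right hmono (Real.exp_pos _).le
      _ = Q t := by rw [mul_assoc, ← Real.exp_add]; simp
  -- integrability on [T, t]
  have hintb : IntervalIntegrable b volume T t := by
    apply ContinuousOn.intervalIntegrable
    rw [uIcc_of_le hTt]
    exact hbc.mono Set.Icc_subset_Ici_self
  have hintb' : IntervalIntegrable (fun s => |b' s|) volume T t := by
    apply ContinuousOn.intervalIntegrable
    rw [uIcc_of_le hTt]
    exact hb'c.abs.mono Set.Icc_subset_Ici_self
  -- bound on the integral of |b'|
  have hrpowc : ContinuousOn (fun s : ℝ => b₂ * (1 + s) ^ (-α - 1)) (Set.Icc T t) := by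
    apply continuousOn_const.mul
    apply ContinuousOn.rpow_const
    · exact continuousOn_const.add continuousOn_id
    · intro x hx
      left
      have : (0:ℝ) < 1 + x := by have := hx.1; linarith
      exact this.ne'
  have hintrpow : IntervalIntegrable (fun s : ℝ => b₂ * (1 + s) ^ (-α - 1)) volume T t := by
    apply ContinuousOn.intervalIntegrable
    rw [uIcc_of_le hTt]
    exact hrpowc
  have hIb' : (∫ s in T..t, |b' s|) ≤ b₂ * (r / N) / (-α) := by
    have hmono : (∫ s in T..t, |b' s|) ≤ ∫ s in T..t, b₂ * (1 + s) ^ (-α - 1) := by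
      apply intervalIntegral.integral_mono_on hTt hintb' hintrpow
      intro x hx
      have h1x : (0:ℝ) < 1 + x := by have := hx.1; linarith
      refine (hb' x hx.1).trans ?_
      have h2 : (1 + x) ^ (-(2*β)) ≤ (1 + x) ^ (-α - 1) :=
        Real.rpow_le_rpow_of_exponent_le (by linarith [hx.1]) (by linarith)
      linarith [mul_le_mul_of_nonneg_left h2 hb₂.le]
    have heval : (∫ s in T..t, b₂ * (1 + s) ^ (-α - 1))
        = b₂ * (1 + t) ^ (-α) / (-α) - b₂ * (1 + T) ^ (-α) / (-α) := by
      apply intervalIntegral.integral_eq_sub_of_hasDerivAt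
      · intro x hx
        rw [uIcc_of_le hTt] at hx
        have h1x : (0:ℝ) < 1 + x := by have := hx.1; linarith
        have hd1 : HasDerivAt (fun s : ℝ => 1 + s) 1 x := by
          simpa using (hasDerivAt_id x).const_add (1:ℝ)
        have hd2 : HasDerivAt (fun y : ℝ => y ^ (-α)) ((-α) * (1 + x) ^ (-α - 1)) (1 + x) :=
          (Real.hasStrictDerivAt_rpow_const (Or.inl h1x.ne')).hasDerivAt
        have hd3 := hd2.comp x hd1
        have hd4 := (hd3.const_mul b₂).div_const (-α)
        exact hd4.congr_deriv (by field_simp [hα0.ne])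
      · exact hintrpow
    rw [heval] at hmono
    have h1T : (0:ℝ) ≤ (1 + T) ^ (-α) := Real.rpow_nonneg (by linarith) _
    have h1t : (1 + t) ^ (-α) ≤ r / N := hzone1 t hTt le_rfl
    calc (∫ s in T..t, |b' s|)
        ≤ b₂ * (1 + t) ^ (-α) / (-α) - b₂ * (1 + T) ^ (-α) / (-α) := hmono
      _ ≤ b₂ * (1 + t) ^ (-α) / (-α) := by
          have h0 : 0 ≤ b₂ * (1 + T) ^ (-α) / (-α) :=
            div_nonneg (by positivity) hα.le
          linarith
      _ ≤ b₂ * (r / N) / (-α) :=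
          div_le_div_of_nonneg_right (mul_le_mul_of_nonneg_left h1t hb₂.le) hα.le
  -- bounds on the exponents
  have hIb := hib T t le_rfl hTt
  have hb'nn : 0 ≤ ∫ s in T..t, |b' s| :=
    intervalIntegral.integral_nonneg hTt (fun x _ => abs_nonneg _)
  have hfrac : (4 / r) * (b₂ * (r / N) / (-α)) = 4 * b₂ / (-α * N) := by
    field_simp [hr.ne', hα0.ne, hb₁.ne']
  have hsplitP : (∫ s in T..t, gP s)
      = (-2) * (∫ s in T..t, b s) + (4 / r) * ∫ s in T..t, |b' s| := by
    simp only [hgP]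
    rw [intervalIntegral.integral_add (hintb.const_mul (-2)) (hintb'.const_mul (4/r)),
      intervalIntegral.integral_const_mul, intervalIntegral.integral_const_mul]
  have hsplitM : (∫ s in T..t, gM s)
      = (-2) * (∫ s in T..t, b s) - (4 / r) * ∫ s in T..t, |b' s| := by
    simp only [hgM]
    rw [intervalIntegral.integral_sub (hintb.const_mul (-2)) (hintb'.const_mul (4/r)),
      intervalIntegral.integral_const_mul, intervalIntegral.integral_const_mul]
  have h4r : (0:ℝ) ≤ 4 / r := by positivity
  have hb'bound : (4 / r) * (∫ s in T..t, |b' s|) ≤ 4 * b₂ / (-α * N) := by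
    rw [← hfrac]
    exact mul_le_mul_of_nonneg_left hIb' h4r
  have habsIb := abs_le.1 hIb
  have hφPle : (∫ s in T..t, gP s) ≤ M := by
    rw [hsplitP, hM]
    nlinarith [hb'bound]
  have hφMge : -M ≤ (∫ s in T..t, gM s) := by
    rw [hsplitM, hM]
    nlinarith [hb'bound, mul_nonneg h4r hb'nn]
  -- Gronwall conclusions
  have hup : Q t ≤ Q T * Real.exp M := by
    have hineq : ∀ x ∈ Set.Ioo T t, Qd x ≤ gP x * Q x := by
      intro x hx
      have h2 := (abs_le.1 (herr x hx.1.le hx.2.le)).2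
      have e : gP x * Q x = -(2 * b x * Q x) + 4 / r * |b' x| * Q x := by
        simp only [hgP]; ring
      rw [e]
      linarith
    have h := hgron gP hgPc hineq
    refine h.trans ?_
    exact mul_le_mul_of_nonneg_left (Real.exp_le_exp.2 hφPle) hQT
  have hdown : Q T ≤ Q t * Real.exp M := by
    have hineq : ∀ x ∈ Set.Ioo T t, gM x * Q x ≤ Qd x := by
      intro x hx
      have h2 := (abs_le.1 (herr x hx.1.le hx.2.le)).1
      have e : gM x * Q x = -(2 * b x * Q x) - 4 / r * |b' x| * Q x := by
        simp only [hgM]; ring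
      rw [e]
      linarith
    have h := hgron' gM hgMc hineq
    have hneg : -(∫ s in T..t, gM s) ≤ M := by linarith
    calc Q T = Q T * Real.exp (∫ s in T..t, gM s) * Real.exp (-(∫ s in T..t, gM s)) := by
          rw [mul_assoc, ← Real.exp_add]; simp
      _ ≤ Q t * Real.exp (-(∫ s in T..t, gM s)) :=
          mul_le_mul_of_nonneg_right h (Real.exp_pos _).le
      _ ≤ Q t * Real.exp M :=
          mul_le_mul_of_nonneg_left (Real.exp_le_exp.2 hneg) hQt
  -- comparison of E and Q
  have hcomp1t : E t ≤ 2 * Q t := by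
    simp only [hE, hQ, hz]
    exact comp_lower r (b t) (zone t hTt le_rfl) (w' t) (w t)
  have hcomp2t : Q t ≤ 2 * E t := by
    simp only [hE, hQ, hz]
    exact comp_upper r (b t) (zone t hTt le_rfl) (w' t) (w t)
  have hcomp1T : E T ≤ 2 * Q T := by
    simp only [hE, hQ, hz]
    exact comp_lower r (b T) (zone T le_rfl hTt) (w' T) (w T)
  have hcomp2T : Q T ≤ 2 * E T := by
    simp only [hE, hQ, hz]
    exact comp_upper r (b T) (zone T le_rfl hTt) (w' T) (w T)
  have hexpM := Real.exp_pos M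
  have hexp1 : 1 ≤ Real.exp M := Real.one_le_exp hMpos.le
  have hEt : E t ≤ K₁^2 * E T := by
    have h1 : E t ≤ 4 * Real.exp M * E T := by nlinarith
    have h2 : 4 * Real.exp M * E T ≤ K₁^2 * E T := by
      have : 4 * Real.exp M ≤ K₁^2 := by rw [hK₁]; nlinarith
      exact mul_le_mul_of_nonneg_right this (hEnn T)
    linarith
  have hET : E T ≤ K₁^2 * E t := by
    have h1 : E T ≤ 4 * Real.exp M * E t := by nlinarith
    have h2 : 4 * Real.exp M * E t ≤ K₁^2 * E t := by
      have : 4 * Real.exp M ≤ K₁^2 := by rw [hK₁]; nlinarith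
      exact mul_le_mul_of_nonneg_right this (hEnn t)
    linarith
  constructor
  · rw [inv_mul_le_iff₀ hK₁pos]
    have h := Real.sqrt_le_sqrt hET
    rwa [Real.sqrt_mul (by positivity) (E t), Real.sqrt_sq hK₁pos.le] at h
  · have h := Real.sqrt_le_sqrt hEt
    rwa [Real.sqrt_mul (by positivity) (E T), Real.sqrt_sq hK₁pos.le] at h
end

section
/- Let T > 0 and let M : [0,T] → ℝ be continuous. Set K₀ := exp(T · sup_{0≤s≤T} |1 − M(s)|). Then for every r ≥ 0 and every twice continuously differentiable function v : [0,T] → ℂ satisfying v''(t) + r² v(t) + M(t) v(t) = 0 on [0,T], the energy E(t) := |v'(t)|² + (1 + r²)|v(t)|² satisfies E(t) ≤ K₀ E(0) for all t ∈ [0,T]. -/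
open MeasureTheory Filter Topology RealInnerProductSpace

/-- Proposition 3.6 of the paper, frequency form: on a finite time interval `[0,T]`,
the Klein–Gordon energy `|v'(t)|² + (1+r²)|v(t)|²` of a solution of
`v'' + r²v + Mv = 0` is bounded by `K₀ = exp(T · sup_{[0,T]} |1 - M|)` times its
initial value. -/
theorem finite_time_energy_estimate
    (T : ℝ) (hT : 0 < T)
    (M : ℝ → ℝ) (hMc : ContinuousOn M (Set.Icc 0 T)) :
    ∀ r : ℝ, 0 ≤ r → ∀ v v' v'' : ℝ → ℂ,
      (∀ t ∈ Set.Icc (0:ℝ) T, HasDerivWithinAt v (v' t) (Set.Icc (0:ℝ) T) t) →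
      (∀ t ∈ Set.Icc (0:ℝ) T, HasDerivWithinAt v' (v'' t) (Set.Icc (0:ℝ) T) t) →
      ContinuousOn v'' (Set.Icc 0 T) →
      (∀ t ∈ Set.Icc (0:ℝ) T, v'' t + (r : ℂ) ^ 2 * v t + (M t : ℂ) * v t = 0) →
      ∀ t ∈ Set.Icc (0:ℝ) T,
        ‖v' t‖ ^ 2 + (1 + r ^ 2) * ‖v t‖ ^ 2
          ≤ Real.exp (T * sSup ((fun s => |1 - M s|) '' Set.Icc (0:ℝ) T)) *
            (‖v' 0‖ ^ 2 + (1 + r ^ 2) * ‖v 0‖ ^ 2) := by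
  intro r hr v v' v'' hv hv' hv''c hode
  set K : ℝ := sSup ((fun s => |1 - M s|) '' Set.Icc (0:ℝ) T) with hK
  have hbdd : BddAbove ((fun s => |1 - M s|) '' Set.Icc (0:ℝ) T) :=
    (isCompact_Icc.image_of_continuousOn
      (((continuousOn_const.sub hMc)).abs)).bddAbove
  have hKge : ∀ t ∈ Set.Icc (0:ℝ) T, |1 - M t| ≤ K := fun t ht =>
    le_csSup hbdd ⟨t, ht, rfl⟩
  have h0T : (0:ℝ) ∈ Set.Icc (0:ℝ) T := ⟨le_refl 0, hT.le⟩
  have hK0 : 0 ≤ K := le_trans (abs_nonneg _) (hKge 0 h0T)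
  -- energy
  set E : ℝ → ℝ := fun t => ‖v' t‖ ^ 2 + (1 + r ^ 2) * ‖v t‖ ^ 2 with hE
  set E' : ℝ → ℝ := fun t => 2 * (1 - M t) * (inner ℝ (v t) (v' t) : ℝ) with hE'
  have hEnn : ∀ t, 0 ≤ E t := fun t => by positivity
  have hEderiv : ∀ t ∈ Set.Icc (0:ℝ) T, HasDerivWithinAt E (E' t) (Set.Icc (0:ℝ) T) t := by
    intro t ht
    have h1 : HasDerivWithinAt (fun s => (inner ℝ (v' s) (v' s) : ℝ))
        ((inner ℝ (v' t) (v'' t) : ℝ) + (inner ℝ (v'' t) (v' t) : ℝ)) (Set.Icc (0:ℝ) T) t :=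
      (hv' t ht).inner ℝ (hv' t ht)
    have h2 : HasDerivWithinAt (fun s => (inner ℝ (v s) (v s) : ℝ))
        ((inner ℝ (v t) (v' t) : ℝ) + (inner ℝ (v' t) (v t) : ℝ)) (Set.Icc (0:ℝ) T) t :=
      (hv t ht).inner ℝ (hv t ht)
    have hsum := h1.add (h2.const_mul (1 + r ^ 2))
    have heq : ∀ s, (inner ℝ (v' s) (v' s) : ℝ) + (1 + r ^ 2) * (inner ℝ (v s) (v s) : ℝ) = E s := by
      intro s; simp [hE, real_inner_self_eq_norm_sq]
    have hv''eq : v'' t = (-(r ^ 2 + M t)) • v t := by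
      have := hode t ht
      have : v'' t = -((r : ℂ) ^ 2 * v t + (M t : ℂ) * v t) := by linear_combination this
      rw [this]
      ring_nf
      simp [Complex.real_smul]
      ring
    have hval : (inner ℝ (v' t) (v'' t) : ℝ) + (inner ℝ (v'' t) (v' t) : ℝ)
        + (1 + r ^ 2) * ((inner ℝ (v t) (v' t) : ℝ) + (inner ℝ (v' t) (v t) : ℝ)) = E' t := by
      rw [hv''eq, real_inner_smul_left, real_inner_smul_right,
        real_inner_comm (v' t) (v t)]
      simp [hE']
      ring
    have := hsum.congr (fun s _ => (heq s).symm) (heq t).symm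
    rwa [hval] at this
  have hEcont : ContinuousOn E (Set.Icc 0 T) := fun t ht =>
    (hEderiv t ht).continuousWithinAt
  -- bound on E'
  have hbound : ∀ t ∈ Set.Icc (0:ℝ) T, |E' t| ≤ K * E t := by
    intro t ht
    have h1 : |E' t| ≤ |1 - M t| * (2 * (‖v t‖ * ‖v' t‖)) := by
      rw [hE']
      calc |2 * (1 - M t) * (inner ℝ (v t) (v' t) : ℝ)| = |1 - M t| * (2 * |(inner ℝ (v t) (v' t) : ℝ)|) := by
            rw [abs_mul, abs_mul]; simp [abs_of_nonneg]; ring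
        _ ≤ |1 - M t| * (2 * (‖v t‖ * ‖v' t‖)) := by
            gcongr
            exact abs_real_inner_le_norm _ _
    have h2 : 2 * (‖v t‖ * ‖v' t‖) ≤ ‖v' t‖ ^ 2 + ‖v t‖ ^ 2 := by nlinarith [sq_nonneg (‖v t‖ - ‖v' t‖)]
    have h3 : ‖v' t‖ ^ 2 + ‖v t‖ ^ 2 ≤ E t := by
      show ‖v' t‖ ^ 2 + ‖v t‖ ^ 2 ≤ ‖v' t‖ ^ 2 + (1 + r ^ 2) * ‖v t‖ ^ 2
      nlinarith [sq_nonneg (‖v t‖), sq_nonneg r]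
    calc |E' t| ≤ |1 - M t| * (2 * (‖v t‖ * ‖v' t‖)) := h1
      _ ≤ K * E t := by
          apply mul_le_mul (hKge t ht) (h2.trans h3) (by positivity) hK0
  -- Gronwall
  have hgron := norm_le_gronwallBound_of_norm_deriv_right_le (f := E) (f' := E')
    (δ := E 0) (K := K) (ε := 0) (a := 0) (b := T) hEcont
    (fun t ht => (hEderiv t (Set.Ico_subset_Icc_self ht)).mono_of_mem_nhdsWithin
      (Icc_mem_nhdsGE_of_mem ht))
    (by simp [Real.norm_eq_abs, abs_of_nonneg (hEnn 0)])
    (fun t ht => by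
      simp only [Real.norm_eq_abs, add_zero]
      rw [abs_of_nonneg (hEnn t)]
      exact hbound t (Set.Ico_subset_Icc_self ht))
  intro t ht
  have := hgron t ht
  rw [Real.norm_eq_abs, abs_of_nonneg (hEnn t), gronwallBound_ε0, sub_zero] at this
  have hfinal : E t ≤ Real.exp (T * K) * E 0 := by
    calc E t ≤ E 0 * Real.exp (K * t) := this
      _ ≤ E 0 * Real.exp (T * K) := by
          rw [mul_comm T K]
          exact mul_le_mul_of_nonneg_left
            (Real.exp_le_exp.mpr (mul_le_mul_of_nonneg_left ht.2 hK0)) (hEnn 0)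
      _ = Real.exp (T * K) * E 0 := mul_comm _ _
  simpa [hE] using hfinal
end
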